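/- arXiv:2210.10579 — 4 statements merged into one kernel-verified Lean document; each statement's English description precedes it below -/
import Mathlib

section
/- Let G be a connected simple graph on n ≥ 4 vertices with chromatic number χ satisfying n/2 ≤ χ ≤ n−1, and suppose the complement of G is disconnected. Then DLS(G) ≥ 2, with equality if and only if G is the complete multipartite graph K_{2,…,2,1,…,1} having n−χ independent classes of size 2 and 2χ−n independent classes of size 1. -/
open Finset Matrix Polynomial

/-- The transmission `Tr(v)` of a vertex `v`: the sum of the distances from `v`
to all other vertices of the graph. -/
noncomputable def transm {n : ℕ} (G : SimpleGraph (Fin n)) (v : Fin n) : ℝ :=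
  ∑ u : Fin n, (G.dist v u : ℝ)

/-- The distance Laplacian matrix `D^L(G) = Diag(Tr) - D(G)` of a graph `G`. -/
noncomputable def distLap {n : ℕ} (G : SimpleGraph (Fin n)) : Matrix (Fin n) (Fin n) ℝ :=
  Matrix.diagonal (transm G) - Matrix.of (fun u v : Fin n => (G.dist u v : ℝ))

/-- `IsDLSpec G μ` says that `μ 0 , μ 1 , …, μ (n-1)` are exactly the eigenvalues
(with multiplicity) of the distance Laplacian matrix of `G`; combined with `Antitone μ`
this means `μ ⟨i-1,_⟩ = ∂_i^L(G)` in the usual decreasing ordering. -/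
def IsDLSpec {n : ℕ} (G : SimpleGraph (Fin n)) (μ : Fin n → ℝ) : Prop :=
  (distLap G).charpoly = ∏ i : Fin n, (X - C (μ i))

/-- The Wiener index `W(G) = (1/2) ∑_v Tr(v)`. -/
noncomputable def wiener {n : ℕ} (G : SimpleGraph (Fin n)) : ℝ :=
  (∑ v : Fin n, transm G v) / 2

/-- The maximum transmission `Tr_max(G) = max_v Tr(v)`. -/
noncomputable def trMax {n : ℕ} (G : SimpleGraph (Fin n)) : ℝ :=
  ⨆ v : Fin n, transm G v

namespace DLSAux

open scoped Classical in
/-- indicator of adjacency in the complement -/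
noncomputable def cind {n : ℕ} (G : SimpleGraph (Fin n)) (u v : Fin n) : ℝ :=
  if Gᶜ.Adj u v then 1 else 0

variable {n : ℕ} {G : SimpleGraph (Fin n)}

lemma cind_nonneg (u v : Fin n) : 0 ≤ cind G u v := by
  unfold cind; split <;> norm_num

lemma cind_symm (u v : Fin n) : cind G u v = cind G v u := by
  unfold cind
  congr 1
  exact propext (SimpleGraph.adj_comm _ _ _)

lemma cind_eq_one {u v : Fin n} (h : Gᶜ.Adj u v) : cind G u v = 1 := by
  unfold cind; simp [h]

lemma exists_far (hc : ¬ Gᶜ.Connected) (hn : 0 < n) (u : Fin n) :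
    ∃ z, ¬ Gᶜ.Reachable u z := by
  by_contra h
  push_neg at h
  haveI : Nonempty (Fin n) := ⟨⟨0, hn⟩⟩
  exact hc ⟨fun a b => (h a).symm.trans (h b)⟩

lemma dist_cast (hG : G.Connected) (hc : ¬ Gᶜ.Connected) (hn : 0 < n) (u v : Fin n) :
    (G.dist u v : ℝ) = (if u = v then 0 else 1) + cind G u v := by
  by_cases h : u = v
  · subst h
    simp [SimpleGraph.dist_self, cind]
  by_cases ha : G.Adj u v
  · have h1 : G.dist u v = 1 := SimpleGraph.dist_eq_one_iff_adj.2 ha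
    have h2 : ¬ Gᶜ.Adj u v := by simp [SimpleGraph.compl_adj, ha]
    simp [h1, h, cind, h2]
  · -- distance is 2
    have hadj : Gᶜ.Adj u v := (SimpleGraph.compl_adj G u v).2 ⟨h, ha⟩
    obtain ⟨z, hz⟩ := exists_far hc hn u
    have hzu : z ≠ u := by
      rintro rfl
      exact hz (SimpleGraph.Reachable.refl z)
    have hzv : z ≠ v := by
      rintro rfl
      exact hz hadj.reachable
    have h1 : G.Adj u z := by
      by_contra hne
      exact hz (SimpleGraph.Adj.reachable ((SimpleGraph.compl_adj G u z).2 ⟨Ne.symm hzu, hne⟩))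
    have h2 : G.Adj z v := by
      by_contra hne
      have : Gᶜ.Adj v z := (SimpleGraph.compl_adj G v z).2 ⟨Ne.symm hzv, fun h => hne h.symm⟩
      exact hz (hadj.reachable.trans this.reachable)
    have hle : G.dist u v ≤ 2 := by
      have := G.dist_le (SimpleGraph.Walk.cons h1 (SimpleGraph.Walk.cons h2 SimpleGraph.Walk.nil))
      simpa using this
    have h0 : G.dist u v ≠ 0 := fun hh => h (hG.dist_eq_zero_iff.1 hh)
    have hone : G.dist u v ≠ 1 := fun hh => ha (SimpleGraph.dist_eq_one_iff_adj.1 hh)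
    have : G.dist u v = 2 := by omega
    rw [this]
    rw [cind_eq_one hadj]
    norm_num [h]




lemma sumsq_pos {x : Fin n → ℝ} (hx : x ≠ 0) : 0 < ∑ i, x i ^ 2 := by
  obtain ⟨k, hk⟩ := Function.ne_iff.1 hx
  have : (0:ℝ) < x k ^ 2 := by
    exact sq_pos_of_ne_zero hk
  exact lt_of_lt_of_le this (Finset.single_le_sum (fun i _ => sq_nonneg (x i)) (mem_univ k))

lemma sum_ident (w : Fin n → Fin n → ℝ) (hw : ∀ u v, w u v = w v u) (x : Fin n → ℝ) :
    ∑ v, (∑ u, w v u) * x v ^ 2 - ∑ v, ∑ u, w v u * (x v * x u)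
      = (1/2) * ∑ v, ∑ u, w v u * (x v - x u) ^ 2 := by
  have key : ∑ v, ∑ u, w v u * x u ^ 2 = ∑ v, ∑ u, w v u * x v ^ 2 := by
    rw [Finset.sum_comm]
    exact Finset.sum_congr rfl fun v _ => Finset.sum_congr rfl fun u _ => by rw [hw]
  have expand : ∀ v u : Fin n, w v u * (x v - x u) ^ 2
      = w v u * x v ^ 2 + w v u * x u ^ 2 - 2 * (w v u * (x v * x u)) := by
    intro v u; ring
  simp_rw [expand, Finset.sum_sub_distrib, Finset.sum_add_distrib, ← Finset.mul_sum, key,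
    Finset.sum_mul]
  ring

lemma half_sum_sq (x : Fin n → ℝ) :
    (1/2) * ∑ v, ∑ u, (x v - x u) ^ 2 = n * (∑ v, x v ^ 2) - (∑ v, x v) ^ 2 := by
  have := sum_ident (fun _ _ => (1:ℝ)) (fun _ _ => rfl) x
  simp only [one_mul] at this
  rw [← this]
  congr 1
  · simp only [Finset.sum_const, Finset.card_univ, Fintype.card_fin, nsmul_eq_mul, mul_one]
    rw [Finset.mul_sum]
  · rw [sq, Finset.sum_mul_sum]

lemma base_nonneg (x : Fin n → ℝ) : 0 ≤ (n:ℝ) * (∑ v, x v ^ 2) - (∑ v, x v) ^ 2 := by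
  rw [← half_sum_sq]
  positivity

lemma base_eq_zero {x : Fin n → ℝ} (h : (n:ℝ) * (∑ v, x v ^ 2) - (∑ v, x v) ^ 2 = 0)
    (u v : Fin n) : x u = x v := by
  rw [← half_sum_sq] at h
  have h2 : ∑ v, ∑ u, (x v - x u) ^ 2 = 0 := by linarith
  have hvu : (x u - x v) ^ 2 = 0 := by
    have hall := (Finset.sum_eq_zero_iff_of_nonneg (fun i _ => by positivity)).1 h2 u (mem_univ u)
    have := (Finset.sum_eq_zero_iff_of_nonneg (fun i _ => sq_nonneg _)).1 hall v (mem_univ v)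
    exact this
  have := sq_eq_zero_iff.1 hvu
  linarith


lemma transm_eq (v : Fin n) : transm G v = ∑ u, (G.dist v u : ℝ) := rfl

/-- the key quadratic form identity -/
lemma qf_eq (hG : G.Connected) (hc : ¬ Gᶜ.Connected) (hn : 0 < n) (x : Fin n → ℝ) :
    x ⬝ᵥ (distLap G *ᵥ x)
      = n * (∑ v, x v ^ 2) - (∑ v, x v) ^ 2
        + (1/2) * ∑ v, ∑ u, cind G v u * (x v - x u) ^ 2 := by
  have step1 : x ⬝ᵥ (distLap G *ᵥ x)
      = ∑ v, (∑ u, (G.dist v u : ℝ)) * x v ^ 2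
        - ∑ v, ∑ u, (G.dist v u : ℝ) * (x v * x u) := by
    rw [distLap, Matrix.sub_mulVec, dotProduct_sub]
    congr 1
    · rw [dotProduct]
      simp only [Matrix.mulVec_diagonal]
      exact Finset.sum_congr rfl fun v _ => by rw [← transm_eq]; ring
    · rw [dotProduct]
      simp only [Matrix.mulVec, dotProduct, Matrix.of_apply]
      exact Finset.sum_congr rfl fun v _ => by
        rw [Finset.mul_sum]
        exact Finset.sum_congr rfl fun u _ => by ring
  rw [step1, sum_ident (fun v u => (G.dist v u : ℝ))
      (fun u v => by show (G.dist u v : ℝ) = (G.dist v u : ℝ); rw [SimpleGraph.dist_comm]) x]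
  have split : ∀ v u : Fin n, (G.dist v u : ℝ) * (x v - x u) ^ 2
      = (x v - x u) ^ 2 + cind G v u * (x v - x u) ^ 2 := by
    intro v u
    rw [dist_cast hG hc hn]
    by_cases h : v = u
    · subst h; simp
    · simp [h]; ring
  simp_rw [split, Finset.sum_add_distrib]
  rw [mul_add, half_sum_sq]

lemma distLap_isHermitian : (distLap G).IsHermitian := by
  unfold Matrix.IsHermitian
  ext i j
  simp only [Matrix.conjTranspose_apply, star_trivial]
  have : ∀ a b : Fin n, distLap G a b = distLap G b a := by
    intro a b
    simp only [distLap, Matrix.sub_apply, Matrix.of_apply, Matrix.diagonal_apply]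
    rw [SimpleGraph.dist_comm]
    by_cases h : a = b
    · subst h; simp
    · simp [h, Ne.symm h]
  exact this j i

lemma distLap_mulVec_one : distLap G *ᵥ (fun _ => (1:ℝ)) = 0 := by
  funext v
  have h2 : (distLap G *ᵥ (fun _ => (1:ℝ))) v = transm G v - ∑ u, (G.dist v u : ℝ) := by
    rw [distLap, Matrix.sub_mulVec]
    simp only [Pi.sub_apply, Matrix.mulVec_diagonal, mul_one]
    congr 1
    simp only [Matrix.mulVec, dotProduct, Matrix.of_apply, mul_one]
  rw [h2, ← transm_eq, sub_self, Pi.zero_apply]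

lemma distLap_transpose : (distLap G)ᵀ = distLap G := by
  have h := (distLap_isHermitian (G := G))
  rw [Matrix.IsHermitian] at h
  conv_rhs => rw [← h]
  ext i j
  simp [Matrix.conjTranspose_apply, Matrix.transpose_apply]

lemma dot_swap (x y : Fin n → ℝ) :
    (distLap G *ᵥ x) ⬝ᵥ y = x ⬝ᵥ (distLap G *ᵥ y) := by
  rw [dotProduct_comm, Matrix.dotProduct_mulVec, ← Matrix.mulVec_transpose,
    distLap_transpose]
  exact dotProduct_comm _ _


lemma mulVec_dot (A : Matrix (Fin n) (Fin n) ℝ) (x y : Fin n → ℝ) :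
    (A *ᵥ x) ⬝ᵥ y = x ⬝ᵥ (Aᵀ *ᵥ y) := by
  rw [Matrix.dotProduct_mulVec, Matrix.vecMul_transpose, dotProduct_comm,
    Matrix.dotProduct_mulVec]

lemma charpoly_similar (P Q A : Matrix (Fin n) (Fin n) ℝ) (hPQ : P * Q = 1) :
    (P * A * Q).charpoly = A.charpoly := by
  unfold Matrix.charpoly
  have hPQ' : (C.mapMatrix P) * (C.mapMatrix Q) = 1 := by
    rw [← _root_.map_mul, hPQ, _root_.map_one]
  have hmap : charmatrix (P * A * Q)
      = (C.mapMatrix P) * charmatrix A * (C.mapMatrix Q) := by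
    unfold Matrix.charmatrix
    rw [Matrix.mul_sub, Matrix.sub_mul]
    congr 1
    · rw [Matrix.scalar_apply]
      have hd : (Matrix.diagonal fun _ : Fin n => (X:ℝ[X]))
          = (X:ℝ[X]) • (1 : Matrix (Fin n) (Fin n) ℝ[X]) := by
        rw [Matrix.smul_one_eq_diagonal]
      rw [hd, mul_smul_comm, smul_mul_assoc, mul_one, hPQ']
    · rw [_root_.map_mul, _root_.map_mul]
  rw [hmap, Matrix.det_mul, Matrix.det_mul]
  have h1 : (C.mapMatrix P).det * (C.mapMatrix Q).det = 1 := by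
    rw [← Matrix.det_mul, hPQ', Matrix.det_one]
  calc (C.mapMatrix P).det * A.charmatrix.det * (C.mapMatrix Q).det
      = (C.mapMatrix P).det * (C.mapMatrix Q).det * A.charmatrix.det := by ring
    _ = A.charmatrix.det := by rw [h1, one_mul]

lemma charpoly_diagonal (d : Fin n → ℝ) :
    (Matrix.diagonal d).charpoly = ∏ i, (X - C (d i)) := by
  unfold Matrix.charpoly
  have h : charmatrix (Matrix.diagonal d) = Matrix.diagonal (fun i => (X : ℝ[X]) - C (d i)) := by
    apply Matrix.ext
    intro i j
    by_cases h : i = j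
    · subst h; simp [Matrix.charmatrix_apply_eq]
    · rw [Matrix.charmatrix_apply_ne _ _ _ h, Matrix.diagonal_apply_ne _ h,
        Matrix.diagonal_apply_ne _ h]
      simp
  rw [h, Matrix.det_diagonal]

variable {A : Matrix (Fin n) (Fin n) ℝ} (hA : A.IsHermitian)

lemma unitary_mul_star : (hA.eigenvectorUnitary : Matrix (Fin n) (Fin n) ℝ)
    * star (hA.eigenvectorUnitary : Matrix (Fin n) (Fin n) ℝ) = 1 :=
  Matrix.mem_unitaryGroup_iff.mp hA.eigenvectorUnitary.2

lemma star_mul_unitary : star (hA.eigenvectorUnitary : Matrix (Fin n) (Fin n) ℝ)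
    * (hA.eigenvectorUnitary : Matrix (Fin n) (Fin n) ℝ) = 1 :=
  Matrix.mem_unitaryGroup_iff'.mp hA.eigenvectorUnitary.2

lemma spectral_real : A = (hA.eigenvectorUnitary : Matrix (Fin n) (Fin n) ℝ)
    * Matrix.diagonal hA.eigenvalues * star (hA.eigenvectorUnitary : Matrix (Fin n) (Fin n) ℝ) := by
  have h := hA.spectral_theorem
  rwa [RCLike.ofReal_real_eq_id, Function.id_comp] at h

lemma charpoly_eq_prod : A.charpoly = ∏ i, (X - C (hA.eigenvalues i)) := by
  conv_lhs => rw [spectral_real hA]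
  rw [charpoly_similar _ _ _ (unitary_mul_star hA), charpoly_diagonal]

lemma star_eq_transpose (M : Matrix (Fin n) (Fin n) ℝ) : star M = Mᵀ := by
  rw [Matrix.star_eq_conjTranspose]
  apply Matrix.ext
  intro i j
  simp [Matrix.conjTranspose_apply]

lemma recover (x : Fin n → ℝ) :
    (hA.eigenvectorUnitary : Matrix (Fin n) (Fin n) ℝ)
      *ᵥ (star (hA.eigenvectorUnitary : Matrix (Fin n) (Fin n) ℝ) *ᵥ x) = x := by
  rw [Matrix.mulVec_mulVec, unitary_mul_star hA, Matrix.one_mulVec]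

lemma norm_expand (x : Fin n → ℝ) :
    ∑ i, x i ^ 2 = ∑ i, ((star (hA.eigenvectorUnitary : Matrix (Fin n) (Fin n) ℝ) *ᵥ x) i) ^ 2 := by
  set U := (hA.eigenvectorUnitary : Matrix (Fin n) (Fin n) ℝ) with hU
  have h1 : ∑ i, x i ^ 2 = x ⬝ᵥ x := by
    rw [dotProduct]; exact Finset.sum_congr rfl fun i _ => (sq (x i))
  have h2 : ∑ i, ((star U *ᵥ x) i) ^ 2 = (star U *ᵥ x) ⬝ᵥ (star U *ᵥ x) := by
    rw [dotProduct]; exact Finset.sum_congr rfl fun i _ => (sq _)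
  rw [h1, h2, mulVec_dot, Matrix.mulVec_mulVec]
  have h3 : (star U)ᵀ * star U = 1 := by
    rw [star_eq_transpose U, Matrix.transpose_transpose, ← star_eq_transpose U,
      unitary_mul_star hA]
  rw [h3, Matrix.one_mulVec]

lemma qf_expand (x : Fin n → ℝ) :
    x ⬝ᵥ (A *ᵥ x)
      = ∑ i, hA.eigenvalues i
          * ((star (hA.eigenvectorUnitary : Matrix (Fin n) (Fin n) ℝ) *ᵥ x) i) ^ 2 := by
  set U := (hA.eigenvectorUnitary : Matrix (Fin n) (Fin n) ℝ) with hU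
  set z := star U *ᵥ x with hz
  have hA2 : A *ᵥ x = U *ᵥ (Matrix.diagonal hA.eigenvalues *ᵥ z) := by
    conv_lhs => rw [spectral_real hA]
    rw [Matrix.mulVec_mulVec, Matrix.mulVec_mulVec]
  rw [hA2, dotProduct_comm, mulVec_dot]
  have hUT : Uᵀ *ᵥ x = z := by rw [← star_eq_transpose U]
  rw [dotProduct_comm, hUT]
  rw [dotProduct]
  exact Finset.sum_congr rfl fun i _ => by
    rw [Matrix.mulVec_diagonal]; ring

lemma zcoord (x : Fin n → ℝ) (i : Fin n) :
    (star (hA.eigenvectorUnitary : Matrix (Fin n) (Fin n) ℝ) *ᵥ x) i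
      = ∑ j, hA.eigenvectorBasis i j * x j := by
  rw [Matrix.mulVec, dotProduct]
  exact Finset.sum_congr rfl fun j _ => by
    rw [star_eq_transpose, Matrix.transpose_apply, Matrix.IsHermitian.eigenvectorUnitary_apply]


/-- the test vector `e_u - e_w` -/
noncomputable def yvec (u w : Fin n) : Fin n → ℝ :=
  fun v => (if v = u then (1:ℝ) else 0) - (if v = w then 1 else 0)

lemma yvec_sum {u w : Fin n} (h : u ≠ w) : ∑ v, yvec (n := n) u w v = 0 := by
  unfold yvec
  rw [Finset.sum_sub_distrib]
  rw [Finset.sum_ite_eq' univ u (fun _ => (1:ℝ)), Finset.sum_ite_eq' univ w (fun _ => (1:ℝ))]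
  simp

lemma yvec_sumsq {u w : Fin n} (h : u ≠ w) : ∑ v, (yvec (n := n) u w v) ^ 2 = 2 := by
  unfold yvec
  have : ∀ v : Fin n, ((if v = u then (1:ℝ) else 0) - (if v = w then 1 else 0)) ^ 2
      = (if v = u then 1 else 0) + (if v = w then 1 else 0) := by
    intro v
    by_cases h1 : v = u <;> by_cases h2 : v = w
    · exact absurd (h1 ▸ h2) h
    · simp [h1, h2, h, Ne.symm h]
    · simp [h1, h2, h, Ne.symm h]
    · simp [h1, h2]
  simp_rw [this]
  rw [Finset.sum_add_distrib, Finset.sum_ite_eq' univ u (fun _ => (1:ℝ)),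
    Finset.sum_ite_eq' univ w (fun _ => (1:ℝ))]
  norm_num

lemma double_sum_nonneg (x : Fin n → ℝ) :
    0 ≤ ∑ v, ∑ u, cind G v u * (x v - x u) ^ 2 := by
  apply Finset.sum_nonneg
  intro v _
  apply Finset.sum_nonneg
  intro u _
  exact mul_nonneg (cind_nonneg v u) (sq_nonneg _)

lemma inner_sum_nonneg (x : Fin n → ℝ) (v : Fin n) :
    0 ≤ ∑ u, cind G v u * (x v - x u) ^ 2 :=
  Finset.sum_nonneg fun u _ => mul_nonneg (cind_nonneg v u) (sq_nonneg _)

lemma Qc_g_lower {x : Fin n → ℝ} {v u : Fin n} :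
    cind G v u * (x v - x u) ^ 2 ≤ ∑ u', cind G v u' * (x v - x u') ^ 2 :=
  Finset.single_le_sum (f := fun u' => cind G v u' * (x v - x u') ^ 2)
    (fun u' _ => mul_nonneg (cind_nonneg v u') (sq_nonneg _)) (mem_univ u)

lemma Qc_pair_lower (x : Fin n → ℝ) (u w : Fin n) (huw : u ≠ w) :
    (∑ u', cind G u u' * (x u - x u') ^ 2) + (∑ u', cind G w u' * (x w - x u') ^ 2)
      ≤ ∑ v, ∑ u', cind G v u' * (x v - x u') ^ 2 := by
  have hsub : ({u, w} : Finset (Fin n)) ⊆ univ := Finset.subset_univ _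
  have := Finset.sum_le_sum_of_subset_of_nonneg hsub
    (fun v _ _ => inner_sum_nonneg (G := G) x v)
  rwa [Finset.sum_pair huw] at this

lemma row_sum_le_one (hyp1 : ∀ u v w : Fin n, Gᶜ.Adj u v → Gᶜ.Adj u w → v = w) (v : Fin n) :
    ∑ u, cind G v u ≤ 1 := by
  by_cases hex : ∃ w, Gᶜ.Adj v w
  · obtain ⟨w, hw⟩ := hex
    have heq : ∑ u, cind G v u = cind G v w := by
      apply Finset.sum_eq_single_of_mem w (mem_univ w)
      intro b _ hb
      unfold cind
      rw [if_neg]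
      intro hadj
      exact hb (hyp1 v b w hadj hw)
    rw [heq, cind_eq_one hw]
  · have heq : ∑ u, cind G v u = 0 := by
      apply Finset.sum_eq_zero
      intro b _
      unfold cind
      rw [if_neg (fun hadj => hex ⟨b, hadj⟩)]
    rw [heq]
    norm_num

lemma Qc_upper (hyp1 : ∀ u v w : Fin n, Gᶜ.Adj u v → Gᶜ.Adj u w → v = w) (x : Fin n → ℝ) :
    ∑ v, ∑ u, cind G v u * (x v - x u) ^ 2 ≤ 4 * ∑ v, x v ^ 2 := by
  have step1 : ∑ v, ∑ u, cind G v u * (x v - x u) ^ 2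
      ≤ ∑ v, ∑ u, (cind G v u * (2 * x v ^ 2) + cind G v u * (2 * x u ^ 2)) := by
    apply Finset.sum_le_sum; intro v _
    apply Finset.sum_le_sum; intro u _
    have h1 : (x v - x u) ^ 2 ≤ 2 * x v ^ 2 + 2 * x u ^ 2 := by nlinarith [sq_nonneg (x v + x u)]
    have h2 := cind_nonneg (G := G) v u
    nlinarith
  have swap : ∑ v, ∑ u, cind G v u * (2 * x u ^ 2) = ∑ v, ∑ u, cind G v u * (2 * x v ^ 2) := by
    rw [Finset.sum_comm]
    exact Finset.sum_congr rfl fun v _ => Finset.sum_congr rfl fun u _ => by rw [cind_symm]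
  have bound : ∑ v, ∑ u, cind G v u * (2 * x v ^ 2) ≤ 2 * ∑ v, x v ^ 2 := by
    have : ∀ v : Fin n, ∑ u, cind G v u * (2 * x v ^ 2) ≤ 2 * x v ^ 2 := by
      intro v
      rw [← Finset.sum_mul]
      calc (∑ u, cind G v u) * (2 * x v ^ 2) ≤ 1 * (2 * x v ^ 2) := by
            apply mul_le_mul_of_nonneg_right (row_sum_le_one hyp1 v) (by positivity)
        _ = 2 * x v ^ 2 := one_mul _
    calc ∑ v, ∑ u, cind G v u * (2 * x v ^ 2) ≤ ∑ v, 2 * x v ^ 2 :=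
          Finset.sum_le_sum fun v _ => this v
      _ = 2 * ∑ v, x v ^ 2 := by rw [Finset.mul_sum]
  calc ∑ v, ∑ u, cind G v u * (x v - x u) ^ 2
      ≤ ∑ v, ∑ u, (cind G v u * (2 * x v ^ 2) + cind G v u * (2 * x u ^ 2)) := step1
    _ = ∑ v, ∑ u, cind G v u * (2 * x v ^ 2) + ∑ v, ∑ u, cind G v u * (2 * x u ^ 2) := by
        simp_rw [Finset.sum_add_distrib]
    _ = ∑ v, ∑ u, cind G v u * (2 * x v ^ 2) + ∑ v, ∑ u, cind G v u * (2 * x v ^ 2) := by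
        rw [swap]
    _ ≤ 2 * ∑ v, x v ^ 2 + 2 * ∑ v, x v ^ 2 := by linarith [bound]
    _ = 4 * ∑ v, x v ^ 2 := by ring

lemma build_P {n : ℕ} (hn : 4 ≤ n) (G : SimpleGraph (Fin n)) (χ : ℕ)
    (hχ : G.chromaticNumber = (χ : ℕ∞))
    (hyp1 : ∀ u v w : Fin n, Gᶜ.Adj u v → Gᶜ.Adj u w → v = w) :
    ∃ P : Fin n → Fin χ, (∀ u v, G.Adj u v ↔ P u ≠ P v) ∧
      (∀ c : Fin χ, (Finset.univ.filter (fun v => P v = c)).card = 1 ∨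
        (Finset.univ.filter (fun v => P v = c)).card = 2) ∧
      (Finset.univ.filter (fun c : Fin χ =>
        (Finset.univ.filter (fun v => P v = c)).card = 2)).card = n - χ := by
  let r : Fin n → Fin n → Prop := fun u v => u = v ∨ Gᶜ.Adj u v
  have requiv : Equivalence r := by
    constructor
    · intro x; exact Or.inl rfl
    · intro a b hab
      rcases hab with h | h
      · exact Or.inl h.symm
      · exact Or.inr h.symm
    · intro a b c hab hbc
      rcases hab with h | h
      · rwa [h]
      · rcases hbc with h2 | h2
        · rw [← h2]; exact Or.inr h
        · exact Or.inl (hyp1 b a c h.symm h2)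
  let s : Setoid (Fin n) := ⟨r, requiv⟩
  haveI : DecidableRel r := fun a b => Classical.dec _
  haveI : DecidableEq (Quotient s) := fun a b => Classical.dec _
  have adj_iff : ∀ u v, G.Adj u v ↔ ¬ r u v := by
    intro u v
    constructor
    · intro hadj hr
      rcases hr with h | h
      · exact G.irrefl (h ▸ hadj)
      · exact ((SimpleGraph.compl_adj G u v).1 h).2 hadj
    · intro hr
      by_contra hadj
      by_cases he : u = v
      · exact hr (Or.inl he)
      · exact hr (Or.inr ((SimpleGraph.compl_adj G u v).2 ⟨he, hadj⟩))
  let k := Fintype.card (Quotient s)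
  let e := Fintype.equivFin (Quotient s)
  have hcol : G.Colorable k := by
    refine ⟨SimpleGraph.Coloring.mk (fun v => e (Quotient.mk s v)) ?_⟩
    intro v w hadj heq
    exact (adj_iff v w).1 hadj (Quotient.exact (e.injective heq))
  have hk_le : k ≤ χ := by
    classical
    let t : Finset (Fin n) := Finset.univ.image (fun q : Quotient s => q.out)
    have hcards : t.card = k := by
      rw [Finset.card_image_of_injective _ Quotient.out_injective, Finset.card_univ]
    have hclique : G.IsClique t := by
      intro a ha b hb hab
      simp only [t, Finset.coe_image, Set.mem_image, Finset.coe_univ, Set.mem_univ, true_and,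
        Set.image_univ, Set.mem_range] at ha hb
      obtain ⟨qa, rfl⟩ := ha
      obtain ⟨qb, rfl⟩ := hb
      rw [adj_iff]
      intro hr
      have : (Quotient.mk s qa.out) = (Quotient.mk s qb.out) := Quotient.sound hr
      rw [Quotient.out_eq, Quotient.out_eq] at this
      exact hab (by rw [this])
    have hle := hclique.card_le_chromaticNumber
    rw [hχ, hcards] at hle
    exact_mod_cast hle
  have hχ_le : χ ≤ k := by
    have hle := hcol.chromaticNumber_le
    rw [hχ] at hle
    exact_mod_cast hle
  have hkχ : k = χ := le_antisymm hk_le hχ_le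
  let P : Fin n → Fin χ := fun v => Fin.cast hkχ (e (Quotient.mk s v))
  have hPiff : ∀ u v, P u = P v ↔ r u v := by
    intro u v
    constructor
    · intro h
      have hv : ((e (Quotient.mk s u)) : ℕ) = ((e (Quotient.mk s v)) : ℕ) := by
        have h3 := congrArg Fin.val h
        simpa [P, Fin.coe_cast] using h3
      exact Quotient.exact (e.injective (Fin.val_injective hv))
    · intro h
      show Fin.cast hkχ _ = Fin.cast hkχ _
      rw [Quotient.sound h]
  have hfiber : ∀ c : Fin χ, ∀ v, (P v = c ↔ r v ((e.symm (Fin.cast hkχ.symm c)).out)) := by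
    intro c v
    rw [← hPiff]
    have h4 : P ((e.symm (Fin.cast hkχ.symm c)).out) = c := by
      show Fin.cast hkχ (e (Quotient.mk s _)) = c
      rw [Quotient.out_eq, Equiv.apply_symm_apply]
      ext
      simp [Fin.coe_cast]
    rw [h4]
  have hdich : ∀ c : Fin χ, (Finset.univ.filter (fun v => P v = c)).card = 1 ∨
      (Finset.univ.filter (fun v => P v = c)).card = 2 := by
    intro c
    set u : Fin n := (e.symm (Fin.cast hkχ.symm c)).out with hu
    by_cases hex : ∃ w, Gᶜ.Adj u w
    · right
      obtain ⟨w, hw⟩ := hex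
      have hset : Finset.univ.filter (fun v => P v = c) = {u, w} := by
        ext v
        simp only [Finset.mem_filter, Finset.mem_univ, true_and, Finset.mem_insert,
          Finset.mem_singleton]
        rw [hfiber c v]
        constructor
        · intro hr
          rcases hr with h | h
          · exact Or.inl h
          · exact Or.inr (hyp1 u v w h.symm hw)
        · rintro (rfl | rfl)
          · exact Or.inl rfl
          · exact Or.inr hw.symm
      rw [hset, Finset.card_pair hw.ne]
    · left
      have hset : Finset.univ.filter (fun v => P v = c) = {u} := by
        ext v
        simp only [Finset.mem_filter, Finset.mem_univ, true_and, Finset.mem_singleton]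
        rw [hfiber c v]
        constructor
        · intro hr
          rcases hr with h | h
          · exact h
          · exact absurd ⟨v, h.symm⟩ hex
        · rintro rfl; exact Or.inl rfl
      rw [hset, Finset.card_singleton]
  refine ⟨P, ?_, hdich, ?_⟩
  · intro u v
    rw [adj_iff u v]
    constructor
    · intro hr hP
      exact hr ((hPiff u v).1 hP)
    · intro hP hr
      exact hP ((hPiff u v).2 hr)
  · have hsum : ∑ c : Fin χ, (Finset.univ.filter (fun v => P v = c)).card = n := by
      have h5 := Finset.card_eq_sum_card_fiberwise (f := P) (s := Finset.univ) (t := Finset.univ)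
        (fun x _ => Finset.mem_univ _)
      rw [Finset.card_univ, Fintype.card_fin] at h5
      exact h5.symm
    have hsplit := Finset.sum_filter_add_sum_filter_not Finset.univ
      (fun c : Fin χ => (Finset.univ.filter (fun v => P v = c)).card = 2)
      (fun c => (Finset.univ.filter (fun v => P v = c)).card)
    have h2 : ∑ c ∈ (Finset.univ.filter (fun c : Fin χ =>
        (Finset.univ.filter (fun v => P v = c)).card = 2)),
          (Finset.univ.filter (fun v => P v = c)).card
        = 2 * (Finset.univ.filter (fun c : Fin χ =>
            (Finset.univ.filter (fun v => P v = c)).card = 2)).card := by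
      rw [Finset.sum_congr rfl (fun c hc => (Finset.mem_filter.1 hc).2), Finset.sum_const,
        smul_eq_mul, mul_comm]
    have h1 : ∑ c ∈ (Finset.univ.filter (fun c : Fin χ =>
        ¬ ((Finset.univ.filter (fun v => P v = c)).card = 2))),
          (Finset.univ.filter (fun v => P v = c)).card
        = (Finset.univ.filter (fun c : Fin χ =>
            ¬ ((Finset.univ.filter (fun v => P v = c)).card = 2))).card := by
      have hone : ∀ c ∈ (Finset.univ.filter (fun c : Fin χ =>
          ¬ ((Finset.univ.filter (fun v => P v = c)).card = 2))),
            (Finset.univ.filter (fun v => P v = c)).card = 1 := by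
        intro c hc
        exact (hdich c).resolve_right (Finset.mem_filter.1 hc).2
      rw [Finset.sum_congr rfl hone, Finset.sum_const, smul_eq_mul, mul_one]
    have hcardsplit := Finset.card_filter_add_card_filter_not
      (s := Finset.univ) (p := fun c : Fin χ => (Finset.univ.filter (fun v => P v = c)).card = 2)
    rw [Finset.card_univ, Fintype.card_fin] at hcardsplit
    rw [h2, h1] at hsplit
    rw [hsum] at hsplit
    omega

end DLSAux

set_option maxHeartbeats 2000000 in
theorem dls_lower_chromatic (n : ℕ) (hn : 4 ≤ n) (G : SimpleGraph (Fin n))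
    (hG : G.Connected) (hc : ¬ Gᶜ.Connected)
    (χ : ℕ) (hχ : G.chromaticNumber = (χ : ℕ∞)) (hχ1 : n ≤ 2 * χ) (hχ2 : χ ≤ n - 1)
    (μ : Fin n → ℝ) (hμ : IsDLSpec G μ) (hmono : Antitone μ) :
    2 ≤ μ ⟨0, by omega⟩ - μ ⟨n - 2, by omega⟩ ∧
    (μ ⟨0, by omega⟩ - μ ⟨n - 2, by omega⟩ = 2 ↔
      ∃ P : Fin n → Fin χ, (∀ u v, G.Adj u v ↔ P u ≠ P v) ∧
        (∀ c : Fin χ, (Finset.univ.filter (fun v => P v = c)).card = 1 ∨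
          (Finset.univ.filter (fun v => P v = c)).card = 2) ∧
        (Finset.univ.filter (fun c : Fin χ =>
          (Finset.univ.filter (fun v => P v = c)).card = 2)).card = n - χ) := by
  classical
  have hn0 : 0 < n := by omega
  set i0 : Fin n := ⟨0, by omega⟩ with hi0def
  set i1 : Fin n := ⟨n - 2, by omega⟩ with hi1def
  set i2 : Fin n := ⟨n - 1, by omega⟩ with hi2def
  set M : Matrix (Fin n) (Fin n) ℝ := distLap G with hMdef
  have hH : M.IsHermitian := DLSAux.distLap_isHermitian
  set ev : Fin n → ℝ := hH.eigenvalues with hevdef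
  -- multiset equality between μ and ev
  have hms : Multiset.map μ Finset.univ.val = Multiset.map ev Finset.univ.val := by
    have hcp : ((Multiset.map μ Finset.univ.val).map (fun a : ℝ => X - C a)).prod
        = ((Multiset.map ev Finset.univ.val).map (fun a : ℝ => X - C a)).prod := by
      rw [Multiset.map_map, Multiset.map_map]
      have h1 : (∏ i : Fin n, (X - C (μ i))) = (∏ i : Fin n, (X - C (ev i))) := by
        rw [← hμ]
        exact DLSAux.charpoly_eq_prod hH
      exact h1
    have h2 := congrArg Polynomial.roots hcp
    rwa [Polynomial.roots_multiset_prod_X_sub_C, Polynomial.roots_multiset_prod_X_sub_C] at h2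
  have mem_ev : ∀ i : Fin n, ∃ j : Fin n, μ j = ev i := by
    intro i
    have h1 : ev i ∈ Multiset.map ev Finset.univ.val :=
      Multiset.mem_map_of_mem ev (Finset.mem_univ i)
    rw [← hms] at h1
    obtain ⟨j, _, hj⟩ := Multiset.mem_map.1 h1
    exact ⟨j, hj⟩
  have mem_mu : ∀ j : Fin n, ∃ i : Fin n, ev i = μ j := by
    intro j
    have h1 : μ j ∈ Multiset.map μ Finset.univ.val :=
      Multiset.mem_map_of_mem μ (Finset.mem_univ j)
    rw [hms] at h1
    obtain ⟨i, _, hi⟩ := Multiset.mem_map.1 h1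
    exact ⟨i, hi⟩
  have card_transfer : ∀ (p : ℝ → Prop) (inst : DecidablePred p),
      (Finset.univ.filter fun j : Fin n => p (μ j)).card
        = (Finset.univ.filter fun i : Fin n => p (ev i)).card := by
    intro p inst
    have key : ∀ f : Fin n → ℝ, (Finset.univ.filter fun j => p (f j)).card
        = Multiset.countP p (Multiset.map f Finset.univ.val) := by
      intro f
      rw [Multiset.countP_map]
      rfl
    rw [key μ, key ev, hms]
  -- quadratic form basics
  have qf : ∀ x : Fin n → ℝ, x ⬝ᵥ (M *ᵥ x)
      = (n:ℝ) * (∑ v, x v ^ 2) - (∑ v, x v) ^ 2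
        + (1/2) * ∑ v, ∑ u, DLSAux.cind G v u * (x v - x u) ^ 2 :=
    fun x => DLSAux.qf_eq (G := G) hG hc hn0 x
  have hμ0max : ∀ j, μ j ≤ μ i0 := fun j => hmono (by simp [hi0def, Fin.le_def])
  have hev_le_mu0 : ∀ i, ev i ≤ μ i0 := by
    intro i
    obtain ⟨j, hj⟩ := mem_ev i
    rw [← hj]; exact hμ0max j
  -- bound on quadratic form from eigenvalue bound
  have qf_le : ∀ (c : ℝ), (∀ i, ev i ≤ c) → ∀ x : Fin n → ℝ,
      x ⬝ᵥ (M *ᵥ x) ≤ c * ∑ i, x i ^ 2 := by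
    intro c hcb x
    rw [DLSAux.qf_expand hH x, DLSAux.norm_expand hH x, Finset.mul_sum]
    apply Finset.sum_le_sum
    intro i _
    exact mul_le_mul_of_nonneg_right (hcb i) (sq_nonneg _)
  -- eigenvector facts
  have hBvec : ∀ i : Fin n, ∃ v : Fin n → ℝ, v ≠ 0 ∧ M *ᵥ v = ev i • v := by
    intro i
    refine ⟨⇑(hH.eigenvectorBasis i), ?_, hH.mulVec_eigenvectorBasis i⟩
    intro hzero
    apply hH.eigenvectorBasis.orthonormal.ne_zero i
    ext k
    exact congrFun hzero k
  have eig_qf : ∀ (t : ℝ) (v : Fin n → ℝ), M *ᵥ v = t • v →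
      v ⬝ᵥ (M *ᵥ v) = t * ∑ k, v k ^ 2 := by
    intro t v hv
    rw [hv, dotProduct_smul, smul_eq_mul]
    congr 1
    rw [dotProduct]
    exact Finset.sum_congr rfl fun k _ => (sq (v k)).symm
  have eig_perp : ∀ (t : ℝ) (v : Fin n → ℝ), t ≠ 0 → M *ᵥ v = t • v → ∑ k, v k = 0 := by
    intro t v ht hv
    have h1 : (fun _ : Fin n => (1:ℝ)) ⬝ᵥ (M *ᵥ v) = 0 := by
      rw [← DLSAux.dot_swap, DLSAux.distLap_mulVec_one, zero_dotProduct]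
    rw [hv] at h1
    have h2 : t * ∑ k, v k = 0 := by
      rw [← h1, dotProduct_smul, smul_eq_mul]
      congr 1
      rw [dotProduct]
      exact Finset.sum_congr rfl fun k _ => (one_mul (v k)).symm
    exact (mul_eq_zero.1 h2).resolve_left ht
  -- every eigenvalue is 0 or at least n
  have hEV1 : ∀ i, ev i = 0 ∨ (n:ℝ) ≤ ev i := by
    intro i
    by_cases h0 : ev i = 0
    · exact Or.inl h0
    right
    obtain ⟨v, hvne, hv⟩ := hBvec i
    have hperp := eig_perp (ev i) v h0 hv
    have hq := eig_qf (ev i) v hv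
    rw [qf v, hperp] at hq
    have hQc := DLSAux.double_sum_nonneg (G := G) v
    have hS := DLSAux.sumsq_pos hvne
    nlinarith
  -- kernel vectors are constant
  have hker : ∀ v : Fin n → ℝ, M *ᵥ v = 0 → ∀ a b : Fin n, v a = v b := by
    intro v hv a b
    have h0 : v ⬝ᵥ (M *ᵥ v) = 0 := by rw [hv, dotProduct_zero]
    rw [qf v] at h0
    have hQc := DLSAux.double_sum_nonneg (G := G) v
    have hbase := DLSAux.base_nonneg (n := n) v
    exact DLSAux.base_eq_zero (by linarith) a b
  -- at most one zero eigenvalue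
  have hEV2 : ∀ i j, ev i = 0 → ev j = 0 → i = j := by
    intro i j hi hj
    by_contra hij
    have hinner : (inner ℝ (hH.eigenvectorBasis i) (hH.eigenvectorBasis j) : ℝ) = 0 :=
      hH.eigenvectorBasis.orthonormal.2 hij
    have hvi : M *ᵥ ⇑(hH.eigenvectorBasis i) = 0 := by
      have h1 := hH.mulVec_eigenvectorBasis i
      rw [show hH.eigenvalues i = (0:ℝ) from hi, zero_smul] at h1
      exact h1
    have hvj : M *ᵥ ⇑(hH.eigenvectorBasis j) = 0 := by
      have h1 := hH.mulVec_eigenvectorBasis j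
      rw [show hH.eigenvalues j = (0:ℝ) from hj, zero_smul] at h1
      exact h1
    have hci := hker _ hvi
    have hcj := hker _ hvj
    have hvine : (⇑(hH.eigenvectorBasis i) : Fin n → ℝ) i0 ≠ 0 := by
      intro h
      apply hH.eigenvectorBasis.orthonormal.ne_zero i
      ext k
      exact (hci k i0).trans h
    have hvjne : (⇑(hH.eigenvectorBasis j) : Fin n → ℝ) i0 ≠ 0 := by
      intro h
      apply hH.eigenvectorBasis.orthonormal.ne_zero j
      ext k
      exact (hcj k i0).trans h
    have hcomp : (inner ℝ (hH.eigenvectorBasis i) (hH.eigenvectorBasis j) : ℝ)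
        = ∑ k, (⇑(hH.eigenvectorBasis i) : Fin n → ℝ) k
            * (⇑(hH.eigenvectorBasis j) : Fin n → ℝ) k := by
      rw [PiLp.inner_apply]
      exact Finset.sum_congr rfl fun k _ => by
        simp [RCLike.inner_apply, starRingEnd_apply, mul_comm]
    rw [hcomp] at hinner
    have hconst : ∑ k, (⇑(hH.eigenvectorBasis i) : Fin n → ℝ) k
        * (⇑(hH.eigenvectorBasis j) : Fin n → ℝ) k
        = n * ((⇑(hH.eigenvectorBasis i) : Fin n → ℝ) i0
            * (⇑(hH.eigenvectorBasis j) : Fin n → ℝ) i0) := by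
      rw [Finset.sum_congr rfl (fun k _ => by rw [hci k i0, hcj k i0])]
      rw [Finset.sum_const, Finset.card_univ, Fintype.card_fin, nsmul_eq_mul]
    rw [hconst] at hinner
    have hn' : (n:ℝ) ≠ 0 := by positivity
    rcases mul_eq_zero.1 ((mul_eq_zero.1 hinner).resolve_left hn') with h | h
    · exact hvine h
    · exact hvjne h
  -- zero is an eigenvalue
  have hdet : M.det = 0 := by
    rw [← Matrix.exists_mulVec_eq_zero_iff]
    refine ⟨fun _ => 1, ?_, DLSAux.distLap_mulVec_one⟩
    intro h
    exact one_ne_zero (congrFun h i0)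
  have hEV3 : ∃ i, ev i = 0 := by
    have hprod := hH.det_eq_prod_eigenvalues
    rw [hdet] at hprod
    obtain ⟨i, _, hi⟩ := Finset.prod_eq_zero_iff.1 hprod.symm
    exact ⟨i, by exact_mod_cast hi⟩
  -- the disconnection test vector
  obtain ⟨z0, hz0⟩ := DLSAux.exists_far (G := G) hc hn0 i0
  set S : Finset (Fin n) := Finset.univ.filter (fun v => Gᶜ.Reachable i0 v) with hSdef
  set p : ℝ := (S.card : ℝ) with hpdef
  set x0 : Fin n → ℝ := fun v => if Gᶜ.Reachable i0 v then (n:ℝ) - p else -p with hx0def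
  have hx0val : ∀ v, x0 v = if Gᶜ.Reachable i0 v then (n:ℝ) - p else -p := fun v => rfl
  have hScard_le : S.card ≤ n - 1 := by
    have hsub : S ⊆ Finset.univ.erase z0 := by
      intro v hv
      rw [Finset.mem_erase]
      refine ⟨?_, Finset.mem_univ v⟩
      intro h
      exact hz0 (h ▸ (Finset.mem_filter.1 hv).2)
    calc S.card ≤ (Finset.univ.erase z0).card := Finset.card_le_card hsub
      _ = n - 1 := by
          rw [Finset.card_erase_of_mem (Finset.mem_univ z0), Finset.card_univ, Fintype.card_fin]
  have hScard_pos : 0 < S.card :=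
    Finset.card_pos.2 ⟨i0, Finset.mem_filter.2 ⟨Finset.mem_univ i0, SimpleGraph.Reachable.refl i0⟩⟩
  have hnotS_card : (Finset.univ.filter (fun v => ¬ Gᶜ.Reachable i0 v)).card = n - S.card := by
    have h1 := Finset.card_filter_add_card_filter_not
      (s := Finset.univ) (p := fun v : Fin n => Gᶜ.Reachable i0 v)
    rw [Finset.card_univ, Fintype.card_fin, ← hSdef] at h1
    omega
  have hx0sum : ∑ v, x0 v = 0 := by
    rw [← Finset.sum_filter_add_sum_filter_not Finset.univ (fun v => Gᶜ.Reachable i0 v)]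
    have h1 : ∀ v ∈ S, x0 v = (n:ℝ) - p := fun v hv => by
      rw [hx0val, if_pos (Finset.mem_filter.1 hv).2]
    have h2 : ∀ v ∈ Finset.univ.filter (fun v => ¬ Gᶜ.Reachable i0 v), x0 v = -p :=
      fun v hv => by rw [hx0val, if_neg (Finset.mem_filter.1 hv).2]
    rw [Finset.sum_congr rfl h1, Finset.sum_congr rfl h2, Finset.sum_const, Finset.sum_const,
      hnotS_card, nsmul_eq_mul, nsmul_eq_mul]
    have hcast : ((n - S.card : ℕ) : ℝ) = n - p := by
      rw [hpdef, Nat.cast_sub (by omega)]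
    rw [hcast, hpdef]
    ring
  have hx0ne : x0 ≠ 0 := by
    intro h
    have h1 : x0 i0 = 0 := congrFun h i0
    have h2 : x0 i0 = (n:ℝ) - p := by
      rw [hx0val, if_pos (SimpleGraph.Reachable.refl i0)]
    have h3 : p ≤ (n:ℝ) - 1 := by
      rw [hpdef]
      have : ((S.card : ℕ) : ℝ) ≤ ((n - 1 : ℕ) : ℝ) := by exact_mod_cast hScard_le
      rw [Nat.cast_sub (by omega)] at this
      simpa using this
    rw [h2] at h1
    linarith
  have hx0Qc : ∑ v, ∑ u, DLSAux.cind G v u * (x0 v - x0 u) ^ 2 = 0 := by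
    apply Finset.sum_eq_zero
    intro v _
    apply Finset.sum_eq_zero
    intro u _
    by_cases hadj : Gᶜ.Adj v u
    · have hre : Gᶜ.Reachable i0 v ↔ Gᶜ.Reachable i0 u :=
        ⟨fun h => h.trans hadj.reachable, fun h => h.trans hadj.symm.reachable⟩
      have hx : x0 v = x0 u := by
        rw [hx0val, hx0val]
        by_cases h : Gᶜ.Reachable i0 v
        · rw [if_pos h, if_pos (hre.1 h)]
        · rw [if_neg h, if_neg (fun hh => h (hre.2 hh))]
      rw [hx]
      simp
    · simp [DLSAux.cind, hadj]
  have hqfx0 : x0 ⬝ᵥ (M *ᵥ x0) = n * ∑ v, x0 v ^ 2 := by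
    rw [qf x0, hx0sum, hx0Qc]
    ring
  -- at least two eigenvalues ≤ n
  obtain ⟨iz, hiz⟩ := hEV3
  have hEV4 : ∃ j, j ≠ iz ∧ ev j ≤ n := by
    by_contra hcon
    push_neg at hcon
    have hexp := DLSAux.qf_expand hH x0
    have hnorm := DLSAux.norm_expand hH x0
    obtain ⟨z, hzdef⟩ : ∃ z : Fin n → ℝ,
        z = star ((hH.eigenvectorUnitary : Matrix (Fin n) (Fin n) ℝ)) *ᵥ x0 := ⟨_, rfl⟩
    rw [← hzdef] at hexp hnorm
    have hziz : z iz = 0 := by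
      have hBker : M *ᵥ ⇑(hH.eigenvectorBasis iz) = 0 := by
        have h1 := hH.mulVec_eigenvectorBasis iz
        rw [show hH.eigenvalues iz = (0:ℝ) from hiz, zero_smul] at h1
        exact h1
      have hBconst := hker _ hBker
      rw [hzdef, DLSAux.zcoord hH x0 iz]
      have hBconst2 : ∀ j : Fin n, hH.eigenvectorBasis iz j * x0 j
          = hH.eigenvectorBasis iz i0 * x0 j := fun j => by
        rw [show (hH.eigenvectorBasis iz j : ℝ) = hH.eigenvectorBasis iz i0 from hBconst j i0]
      rw [Finset.sum_congr rfl (fun j _ => hBconst2 j), ← Finset.mul_sum, hx0sum, mul_zero]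
    have htot : ∑ i, (ev i - n) * z i ^ 2 = 0 := by
      have h1 : ∑ i, (ev i - n) * z i ^ 2
          = ∑ i, ev i * z i ^ 2 - n * ∑ i, z i ^ 2 := by
        rw [Finset.mul_sum, ← Finset.sum_sub_distrib]
        exact Finset.sum_congr rfl fun i _ => by ring
      rw [h1]
      rw [hqfx0] at hexp
      rw [← hexp, ← hnorm]
      ring
    have hsum0 : ∑ i ∈ Finset.univ.erase iz, (ev i - n) * z i ^ 2 = 0 := by
      rw [← Finset.sum_erase_add Finset.univ _ (Finset.mem_univ iz)] at htot
      rw [hziz] at htot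
      simpa using htot
    have hzzero : ∀ i, z i = 0 := by
      intro i
      by_cases hiiz : i = iz
      · rw [hiiz]; exact hziz
      · have hnn : ∀ j ∈ Finset.univ.erase iz, 0 ≤ (ev j - n) * z j ^ 2 := by
          intro j hj
          have hj2 := hcon j (Finset.mem_erase.1 hj).1
          have : (0:ℝ) ≤ ev j - n := by linarith
          positivity
        have hterm := (Finset.sum_eq_zero_iff_of_nonneg hnn).1 hsum0 i
          (Finset.mem_erase.2 ⟨hiiz, Finset.mem_univ i⟩)
        have hpos : (0:ℝ) < ev i - n := by
          have := hcon i hiiz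
          linarith
        have := (mul_eq_zero.1 hterm).resolve_left (ne_of_gt hpos)
        exact pow_eq_zero_iff (by norm_num) |>.1 this
    have hx00 : x0 = 0 := by
      have hrec := DLSAux.recover hH x0
      rw [← hzdef, show z = 0 from funext hzzero, Matrix.mulVec_zero] at hrec
      exact hrec.symm
    exact hx0ne hx00
  -- transfer to μ
  have hmuA : ∀ j, μ j = 0 ∨ (n:ℝ) ≤ μ j := by
    intro j
    obtain ⟨i, hi⟩ := mem_mu j
    rw [← hi]
    exact hEV1 i
  have hi1i2 : i1 ≠ i2 := by
    intro h
    have := congrArg Fin.val h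
    simp [hi1def, hi2def] at this
    omega
  have hi1_ge : (n:ℝ) ≤ μ i1 := by
    by_contra hlt
    push_neg at hlt
    have h1 : μ i1 = 0 := (hmuA i1).resolve_right (not_le.2 hlt)
    have h2 : μ i2 = 0 := by
      have hle : μ i2 ≤ μ i1 := hmono (by rw [Fin.le_def]; simp [hi1def, hi2def]; omega)
      rcases hmuA i2 with h | h
      · exact h
      · linarith
    have hcard : 1 < (Finset.univ.filter (fun j : Fin n => μ j = 0)).card := by
      apply Finset.one_lt_card.2
      exact ⟨i1, Finset.mem_filter.2 ⟨Finset.mem_univ _, h1⟩,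
        i2, Finset.mem_filter.2 ⟨Finset.mem_univ _, h2⟩, hi1i2⟩
    rw [card_transfer (fun t => t = 0) inferInstance] at hcard
    have hone : (Finset.univ.filter (fun i : Fin n => ev i = 0)).card ≤ 1 :=
      Finset.card_le_one.2 (fun a ha b hb =>
        hEV2 a b (Finset.mem_filter.1 ha).2 (Finset.mem_filter.1 hb).2)
    omega
  have hi1_le : μ i1 ≤ (n:ℝ) := by
    obtain ⟨j, hjne, hjle⟩ := hEV4
    have hcard : 1 < (Finset.univ.filter (fun i : Fin n => ev i ≤ (n:ℝ))).card := by
      apply Finset.one_lt_card.2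
      refine ⟨j, Finset.mem_filter.2 ⟨Finset.mem_univ _, hjle⟩,
        iz, Finset.mem_filter.2 ⟨Finset.mem_univ _, by rw [hiz]; positivity⟩, hjne⟩
    rw [← card_transfer (fun t => t ≤ (n:ℝ)) inferInstance] at hcard
    obtain ⟨a, ha, b, hb, hab⟩ := Finset.one_lt_card.1 hcard
    have ha2 : μ a ≤ n := (Finset.mem_filter.1 ha).2
    have hb2 : μ b ≤ n := (Finset.mem_filter.1 hb).2
    rcases lt_or_gt_of_ne hab with h | h
    · have hale : a ≤ i1 := by
        rw [Fin.le_def]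
        have := b.isLt
        have h2 : a.val < b.val := h
        simp [hi1def]
        omega
      exact le_trans (hmono hale) ha2
    · have hble : b ≤ i1 := by
        rw [Fin.le_def]
        have := a.isLt
        have h2 : b.val < a.val := h
        simp [hi1def]
        omega
      exact le_trans (hmono hble) hb2
  have hi1n : μ i1 = (n:ℝ) := le_antisymm hi1_le hi1_ge
  -- a nonadjacent pair exists
  have hnadj : ∃ u w : Fin n, Gᶜ.Adj u w := by
    by_contra h
    push_neg at h
    have hcol : G.Colorable (n - 1) := by
      rw [← SimpleGraph.chromaticNumber_le_iff_colorable, hχ]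
      exact_mod_cast hχ2
    obtain ⟨C⟩ := hcol
    have hinj : Function.Injective C := by
      intro a b hab
      by_contra hne
      have hadj : G.Adj a b := by
        by_contra hnadj
        exact h a b ((SimpleGraph.compl_adj G a b).2 ⟨hne, hnadj⟩)
      exact C.valid hadj hab
    have hcard := Fintype.card_le_of_injective C hinj
    simp only [Fintype.card_fin] at hcard
    omega
  obtain ⟨ua, wa, hGadj⟩ := hnadj
  -- the lower bound μ 0 ≥ n + 2
  have hyval : ∀ (u w : Fin n), u ≠ w →
      DLSAux.yvec (n := n) u w u = 1 ∧ DLSAux.yvec (n := n) u w w = -1 := by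
    intro u w huw
    constructor
    · show (if u = u then (1:ℝ) else 0) - (if u = w then 1 else 0) = 1
      rw [if_pos rfl, if_neg huw]
      norm_num
    · show (if w = u then (1:ℝ) else 0) - (if w = w then 1 else 0) = -1
      rw [if_neg (Ne.symm huw), if_pos rfl]
      norm_num
  have hQlow : ∀ (u w : Fin n), Gᶜ.Adj u w →
      (8:ℝ) ≤ ∑ v, ∑ u', DLSAux.cind G v u' * (DLSAux.yvec (n := n) u w v
        - DLSAux.yvec (n := n) u w u') ^ 2 := by
    intro u w hadj
    obtain ⟨hyu, hyw⟩ := hyval u w hadj.ne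
    have hp := DLSAux.Qc_pair_lower (G := G) (DLSAux.yvec u w) u w hadj.ne
    have g1 : (4:ℝ) ≤ ∑ u', DLSAux.cind G u u'
        * (DLSAux.yvec (n := n) u w u - DLSAux.yvec (n := n) u w u') ^ 2 := by
      have h1 := DLSAux.Qc_g_lower (G := G) (x := DLSAux.yvec u w) (v := u) (u := w)
      have hterm : DLSAux.cind G u w
          * (DLSAux.yvec (n := n) u w u - DLSAux.yvec (n := n) u w w) ^ 2 = 4 := by
        rw [DLSAux.cind_eq_one hadj, hyu, hyw]
        norm_num
      linarith
    have g2 : (4:ℝ) ≤ ∑ u', DLSAux.cind G w u'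
        * (DLSAux.yvec (n := n) u w w - DLSAux.yvec (n := n) u w u') ^ 2 := by
      have h1 := DLSAux.Qc_g_lower (G := G) (x := DLSAux.yvec u w) (v := w) (u := u)
      have hterm : DLSAux.cind G w u
          * (DLSAux.yvec (n := n) u w w - DLSAux.yvec (n := n) u w u) ^ 2 = 4 := by
        rw [DLSAux.cind_eq_one hadj.symm, hyu, hyw]
        norm_num
      linarith
    linarith
  have hmu0_ge : (n:ℝ) + 2 ≤ μ i0 := by
    have hb := qf_le (μ i0) hev_le_mu0 (DLSAux.yvec ua wa)
    rw [qf (DLSAux.yvec ua wa), DLSAux.yvec_sum hGadj.ne, DLSAux.yvec_sumsq hGadj.ne] at hb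
    have h8 := hQlow ua wa hGadj
    linarith
  refine ⟨by rw [hi1n]; linarith, ?_, ?_⟩
  · -- equality → multipartite structure
    intro heq
    have hmu0 : μ i0 = (n:ℝ) + 2 := by
      rw [hi1n] at heq
      linarith
    have hbound : ∀ x : Fin n → ℝ, x ⬝ᵥ (M *ᵥ x) ≤ ((n:ℝ) + 2) * ∑ i, x i ^ 2 :=
      qf_le _ (fun i => (hev_le_mu0 i).trans (le_of_eq hmu0))
    have hyp1 : ∀ u v w : Fin n, Gᶜ.Adj u v → Gᶜ.Adj u w → v = w := by
      intro u v w huv huw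
      by_contra hvw
      obtain ⟨hyu, hyv⟩ := hyval u v huv.ne
      have hyw : DLSAux.yvec (n := n) u v w = 0 := by
        show (if w = u then (1:ℝ) else 0) - (if w = v then 1 else 0) = 0
        rw [if_neg (Ne.symm huw.ne), if_neg (fun h => hvw h.symm)]
        norm_num
      -- inner sum at u is at least 5
      have g1 : (5:ℝ) ≤ ∑ u', DLSAux.cind G u u'
          * (DLSAux.yvec (n := n) u v u - DLSAux.yvec (n := n) u v u') ^ 2 := by
        have hmono2 := Finset.sum_le_sum_of_subset_of_nonneg
          (f := fun a => DLSAux.cind G u a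
            * (DLSAux.yvec (n := n) u v u - DLSAux.yvec (n := n) u v a) ^ 2)
          (Finset.subset_univ ({v, w} : Finset (Fin n)))
          (fun a _ _ => mul_nonneg (DLSAux.cind_nonneg (G := G) u a) (sq_nonneg _))
        rw [Finset.sum_pair hvw] at hmono2
        have htermv : DLSAux.cind G u v
            * (DLSAux.yvec (n := n) u v u - DLSAux.yvec (n := n) u v v) ^ 2 = 4 := by
          rw [DLSAux.cind_eq_one huv, hyu, hyv]
          norm_num
        have htermw : DLSAux.cind G u w
            * (DLSAux.yvec (n := n) u v u - DLSAux.yvec (n := n) u v w) ^ 2 = 1 := by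
          rw [DLSAux.cind_eq_one huw, hyu, hyw]
          norm_num
        linarith
      have g2 : (4:ℝ) ≤ ∑ u', DLSAux.cind G v u'
          * (DLSAux.yvec (n := n) u v v - DLSAux.yvec (n := n) u v u') ^ 2 := by
        have h1 := DLSAux.Qc_g_lower (G := G) (x := DLSAux.yvec u v) (v := v) (u := u)
        have hterm : DLSAux.cind G v u
            * (DLSAux.yvec (n := n) u v v - DLSAux.yvec (n := n) u v u) ^ 2 = 4 := by
          rw [DLSAux.cind_eq_one huv.symm, hyu, hyv]
          norm_num
        linarith
      have hp := DLSAux.Qc_pair_lower (G := G) (DLSAux.yvec u v) u v huv.ne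
      have hb := hbound (DLSAux.yvec u v)
      rw [qf (DLSAux.yvec u v), DLSAux.yvec_sum huv.ne, DLSAux.yvec_sumsq huv.ne] at hb
      linarith
    exact DLSAux.build_P hn G χ hχ hyp1
  · -- multipartite structure → equality
    rintro ⟨P, hP1, hP2, hP3⟩
    have hyp1 : ∀ u v w : Fin n, Gᶜ.Adj u v → Gᶜ.Adj u w → v = w := by
      intro u v w huv huw
      by_contra hvw
      have hPuv : P u = P v := by
        by_contra hne
        exact ((SimpleGraph.compl_adj G u v).1 huv).2 ((hP1 u v).2 hne)
      have hPuw : P u = P w := by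
        by_contra hne
        exact ((SimpleGraph.compl_adj G u w).1 huw).2 ((hP1 u w).2 hne)
      have hsub : ({u, v, w} : Finset (Fin n)) ⊆ Finset.univ.filter (fun x => P x = P u) := by
        intro a ha
        rw [Finset.mem_insert, Finset.mem_insert, Finset.mem_singleton] at ha
        rw [Finset.mem_filter]
        refine ⟨Finset.mem_univ a, ?_⟩
        rcases ha with rfl | rfl | rfl
        · rfl
        · exact hPuv.symm
        · exact hPuw.symm
      have hcard3 : ({u, v, w} : Finset (Fin n)).card = 3 := by
        rw [Finset.card_insert_of_notMem, Finset.card_insert_of_notMem,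
          Finset.card_singleton]
        · rw [Finset.mem_singleton]; exact hvw
        · rw [Finset.mem_insert, Finset.mem_singleton]
          push_neg
          exact ⟨huv.ne, huw.ne⟩
      have hle := Finset.card_le_card hsub
      rw [hcard3] at hle
      rcases hP2 (P u) with h | h <;> omega
    have hevle : ∀ i, ev i ≤ (n:ℝ) + 2 := by
      intro i
      obtain ⟨v, hvne, hv⟩ := hBvec i
      have hq := eig_qf (ev i) v hv
      rw [qf v] at hq
      have hup := DLSAux.Qc_upper (G := G) hyp1 v
      have hS := DLSAux.sumsq_pos hvne
      nlinarith [sq_nonneg (∑ k, v k)]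
    have hle : μ i0 ≤ (n:ℝ) + 2 := by
      obtain ⟨i, hi⟩ := mem_mu i0
      rw [← hi]
      exact hevle i
    rw [hi1n]
    linarith
end

section
/- Let G be a connected simple graph on n vertices with diameter exactly 2 and independence number α(G) ≥ 2. Then the distance Laplacian spectral radius satisfies ∂₁^L(G) ≥ n + α(G). -/
open Finset Matrix Polynomial

/-- The independence number `α(G)`: the maximum size of a set of pairwise
nonadjacent vertices of `G`. -/
noncomputable def indepNum {n : ℕ} (G : SimpleGraph (Fin n)) : ℕ :=
  sSup {k | ∃ s : Finset (Fin n), (∀ u ∈ s, ∀ v ∈ s, ¬ G.Adj u v) ∧ s.card = k}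

/-- A real number in the spectrum of a real matrix is a root of its characteristic
polynomial. -/
lemma charpoly_eval_eq_zero_of_mem_spectrum {m : ℕ} (A : Matrix (Fin m) (Fin m) ℝ) (t : ℝ)
    (ht : t ∈ spectrum ℝ A) : A.charpoly.eval t = 0 := by
  rw [spectrum.mem_iff] at ht
  have hdet : (algebraMap ℝ (Matrix (Fin m) (Fin m) ℝ) t - A).det = 0 := by
    by_contra h
    exact ht ((Matrix.isUnit_iff_isUnit_det _).2 (isUnit_iff_ne_zero.2 h))
  have heq : A.charpoly.eval t = (algebraMap ℝ (Matrix (Fin m) (Fin m) ℝ) t - A).det := by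
    rw [Matrix.charpoly, ← Polynomial.coe_evalRingHom, RingHom.map_det]
    congr 1
    ext i j
    by_cases h : i = j <;>
      simp [Matrix.charmatrix_apply, h, Matrix.algebraMap_matrix_apply, Matrix.one_apply,
        Matrix.diagonal_apply, Matrix.sub_apply, Matrix.map_apply]
  rw [heq, hdet]

/-- A Rayleigh-quotient style bound: if a unit-independent test vector `x` with
`x ⬝ᵥ x = 2` has quadratic form at least `2 c`, then some eigenvalue is at least `c`. -/
lemma exists_eig_ge {m : ℕ} (hm : 0 < m) (A : Matrix (Fin m) (Fin m) ℝ) (hH : A.IsHermitian)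
    (x : Fin m → ℝ) (c : ℝ) (hx : x ⬝ᵥ x = 2) (hq : 2 * c ≤ x ⬝ᵥ (A *ᵥ x)) :
    ∃ i, c ≤ hH.eigenvalues i := by
  have : Nonempty (Fin m) := ⟨⟨0, hm⟩⟩
  obtain ⟨i₀, hi₀⟩ := Finite.exists_max hH.eigenvalues
  refine ⟨i₀, ?_⟩
  set U := (hH.eigenvectorUnitary : Matrix (Fin m) (Fin m) ℝ) with hU
  have hs : star U = Uᵀ := by ext i j; simp [Matrix.star_apply]
  have hUU : U * Uᵀ = 1 := by
    have := (Matrix.mem_unitaryGroup_iff).mp hH.eigenvectorUnitary.2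
    rwa [hs] at this
  have hA : A = U * diagonal hH.eigenvalues * Uᵀ := by
    have h := hH.spectral_theorem
    rw [Unitary.conjStarAlgAut_apply, ← hU, hs] at h
    simpa [RCLike.ofReal_real_eq_id] using h
  have hq1 : x ⬝ᵥ (A *ᵥ x) = (Uᵀ *ᵥ x) ⬝ᵥ (diagonal hH.eigenvalues *ᵥ (Uᵀ *ᵥ x)) := by
    conv_lhs => rw [hA]
    rw [← Matrix.mulVec_mulVec, ← Matrix.mulVec_mulVec, Matrix.dotProduct_mulVec,
      Matrix.mulVec_transpose]
  have hz2 : (Uᵀ *ᵥ x) ⬝ᵥ (Uᵀ *ᵥ x) = 2 := by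
    have h1 : (Uᵀ *ᵥ x) ⬝ᵥ (Uᵀ *ᵥ x) = ((Uᵀ *ᵥ x) ᵥ* Uᵀ) ⬝ᵥ x :=
      Matrix.dotProduct_mulVec _ Uᵀ x
    have h2 : (Uᵀ *ᵥ x) ᵥ* Uᵀ = x := by
      rw [Matrix.vecMul_transpose, Matrix.mulVec_mulVec, hUU, Matrix.one_mulVec]
    rw [h1, h2, hx]
  have hsum : (Uᵀ *ᵥ x) ⬝ᵥ (diagonal hH.eigenvalues *ᵥ (Uᵀ *ᵥ x))
      ≤ hH.eigenvalues i₀ * ((Uᵀ *ᵥ x) ⬝ᵥ (Uᵀ *ᵥ x)) := by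
    rw [dotProduct, dotProduct, Finset.mul_sum]
    refine Finset.sum_le_sum fun i _ => ?_
    rw [Matrix.mulVec_diagonal]
    have h1 : (Uᵀ *ᵥ x) i * (hH.eigenvalues i * (Uᵀ *ᵥ x) i)
        = hH.eigenvalues i * ((Uᵀ *ᵥ x) i * (Uᵀ *ᵥ x) i) := by ring
    rw [h1]
    exact mul_le_mul_of_nonneg_right (hi₀ i) (mul_self_nonneg _)
  rw [hq1] at hq
  rw [hz2] at hsum
  linarith

theorem distLap_spectral_radius_ge_indepNum (n : ℕ) (G : SimpleGraph (Fin n))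
    (hG : G.Connected) (hd : G.diam = 2) (hα : 2 ≤ indepNum G)
    (μ : Fin n → ℝ) (hμ : IsDLSpec G μ) (hmono : Antitone μ) :
    (n : ℝ) + (indepNum G : ℝ) ≤ μ ⟨0, by have h0 : 0 < n := Fin.pos_iff_nonempty.mpr hG.nonempty; omega⟩ := by
  classical
  have hn : 0 < n := Fin.pos_iff_nonempty.mpr hG.nonempty
  -- an independent set of maximum size
  have hmem : indepNum G ∈
      {k | ∃ s : Finset (Fin n), (∀ u ∈ s, ∀ v ∈ s, ¬ G.Adj u v) ∧ s.card = k} := by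
    apply Nat.sSup_mem
    · exact ⟨0, ∅, by simp⟩
    · refine ⟨n, fun k hk => ?_⟩
      obtain ⟨s, -, hc⟩ := hk
      simpa [← hc] using (Finset.card_le_univ s).trans_eq (by simp)
  obtain ⟨s, hs, hcard⟩ := hmem
  have hα2 : 2 ≤ s.card := hcard ▸ hα
  obtain ⟨u, hu, w, hw, huw⟩ := Finset.one_lt_card.mp (show 1 < s.card by omega)
  -- distance facts
  have hne_top : G.ediam ≠ ⊤ := SimpleGraph.ediam_ne_top_of_diam_ne_zero (by rw [hd]; omega)
  have hle2 : ∀ a b : Fin n, G.dist a b ≤ 2 := fun a b => hd ▸ SimpleGraph.dist_le_diam hne_top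
  have hdist2 : ∀ a ∈ s, ∀ b ∈ s, a ≠ b → G.dist a b = 2 := by
    intro a ha b hb hab
    have h1 : G.dist a b ≠ 1 := fun h => hs a ha b hb (SimpleGraph.dist_eq_one_iff_adj.mp h)
    have h0 : 0 < G.dist a b := hG.pos_dist_of_ne hab
    have := hle2 a b
    omega
  have hsn : s.card ≤ n := (Finset.card_le_univ s).trans_eq (by simp)
  -- transmission lower bound for vertices of the independent set
  have htr : ∀ a ∈ s, (n : ℝ) + (indepNum G : ℝ) - 2 ≤ transm G a := by
    intro a ha
    have h1 : ∑ v ∈ s, G.dist a v = 2 * (s.card - 1) := by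
      rw [← Finset.add_sum_erase s _ ha, SimpleGraph.dist_self]
      have h2 : ∑ v ∈ s.erase a, G.dist a v = ∑ _v ∈ s.erase a, 2 :=
        Finset.sum_congr rfl fun v hv =>
          hdist2 a ha v (Finset.mem_of_mem_erase hv) (Ne.symm (Finset.ne_of_mem_erase hv))
      rw [h2, Finset.sum_const, smul_eq_mul, Finset.card_erase_of_mem ha]
      omega
    have h2 : sᶜ.card ≤ ∑ v ∈ sᶜ, G.dist a v := by
      have := Finset.sum_le_sum (s := sᶜ) (f := fun _ => 1) (g := fun v => G.dist a v) ?_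
      · simpa using this
      · intro v hv
        have hva : v ≠ a := fun h => (Finset.mem_compl.mp hv) (h ▸ ha)
        exact hG.pos_dist_of_ne (Ne.symm hva)
    have hcc : sᶜ.card = n - s.card := by simp [Finset.card_compl]
    have hNat : n + s.card - 2 ≤ ∑ v, G.dist a v := by
      rw [← Finset.sum_add_sum_compl s (fun v => G.dist a v), h1]
      omega
    have hcast : transm G a = ((∑ v, G.dist a v : ℕ) : ℝ) := by
      simp [transm]
    rw [hcast, ← hcard]
    have h2' : (2 : ℕ) ≤ n + s.card := by omega
    calc (n : ℝ) + (s.card : ℝ) - 2 = ((n + s.card - 2 : ℕ) : ℝ) := by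
          rw [Nat.cast_sub h2']; push_cast; ring
      _ ≤ _ := Nat.cast_le.mpr hNat
  -- distLap is symmetric
  have hHerm : (distLap G).IsHermitian := by
    ext i j
    simp only [Matrix.conjTranspose_apply, star_trivial]
    by_cases h : i = j
    · subst h; rfl
    · simp [distLap, Matrix.diagonal_apply_ne _ h, Matrix.diagonal_apply_ne _ (Ne.symm h),
        SimpleGraph.dist_comm]
  -- entries of distLap
  have hAdiag : ∀ i, distLap G i i = transm G i := by
    intro i; simp [distLap, SimpleGraph.dist_self]
  have hAuw : distLap G u w = -2 := by
    have := hdist2 u hu w hw huw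
    simp [distLap, Matrix.diagonal_apply_ne _ huw, this]
  have hAwu : distLap G w u = -2 := by
    have := hdist2 w hw u hu (Ne.symm huw)
    simp [distLap, Matrix.diagonal_apply_ne _ (Ne.symm huw), this]
  -- the test vector
  set x : Fin n → ℝ := fun v => if v = u then 1 else if v = w then -1 else 0 with hxdef
  have hzero : ∀ v : Fin n, v ∉ ({u, w} : Finset (Fin n)) → x v = 0 := by
    intro v hv
    simp only [Finset.mem_insert, Finset.mem_singleton, not_or] at hv
    simp [hxdef, hv.1, hv.2]
  have hxu : x u = 1 := by simp [hxdef]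
  have hxw : x w = -1 := by simp [hxdef, Ne.symm huw]
  have hxx : x ⬝ᵥ x = 2 := by
    rw [dotProduct,
      ← Finset.sum_subset (Finset.subset_univ ({u, w} : Finset (Fin n)))
        (fun v _ hv => by rw [hzero v hv, mul_zero]),
      Finset.sum_pair huw, hxu, hxw]
    norm_num
  have hmv : ∀ i, (distLap G *ᵥ x) i = distLap G i u - distLap G i w := by
    intro i
    rw [Matrix.mulVec, dotProduct,
      ← Finset.sum_subset (Finset.subset_univ ({u, w} : Finset (Fin n)))
        (fun v _ hv => by rw [hzero v hv, mul_zero]),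
      Finset.sum_pair huw, hxu, hxw]
    ring
  have hq : x ⬝ᵥ (distLap G *ᵥ x) = transm G u + transm G w + 4 := by
    rw [dotProduct,
      ← Finset.sum_subset (Finset.subset_univ ({u, w} : Finset (Fin n)))
        (fun v _ hv => by rw [hzero v hv, zero_mul]),
      Finset.sum_pair huw, hmv u, hmv w, hxu, hxw, hAdiag u, hAdiag w, hAuw, hAwu]
    ring
  -- apply the Rayleigh bound
  have hqge : 2 * ((n : ℝ) + (indepNum G : ℝ)) ≤ x ⬝ᵥ (distLap G *ᵥ x) := by
    have h1 := htr u hu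
    have h2 := htr w hw
    rw [hq]; linarith
  obtain ⟨i, hi⟩ := exists_eig_ge hn (distLap G) hHerm x _ hxx hqge
  -- every Hermitian eigenvalue is one of the `μ k`
  have hspec := hHerm.eigenvalues_mem_spectrum_real i
  have heval := charpoly_eval_eq_zero_of_mem_spectrum (distLap G) _ hspec
  rw [hμ] at heval
  rw [Polynomial.eval_prod] at heval
  obtain ⟨k, -, hk⟩ := Finset.prod_eq_zero_iff.mp heval
  rw [Polynomial.eval_sub, Polynomial.eval_X, Polynomial.eval_C, sub_eq_zero] at hk
  have hk0 : μ ⟨0, by omega⟩ ≥ μ k := hmono (by simp [Fin.le_def])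
  calc (n : ℝ) + (indepNum G : ℝ) ≤ hHerm.eigenvalues i := hi
    _ = μ k := hk
    _ ≤ _ := hk0
end

section
/- Let G be a connected simple graph on n vertices with diameter at most 2 and maximum vertex degree Δ(G). Then the second smallest distance Laplacian eigenvalue satisfies ∂_{n−1}^L(G) ≤ 2n − 1 − Δ(G). -/
open Finset Matrix Polynomial

/-! ### Auxiliary lemmas -/

lemma aux_charpoly_conj {m : Type*} [Fintype m] [DecidableEq m] {R : Type*} [CommRing R]
    (U A V : Matrix m m R) (h1 : U * V = 1) :
    (U * A * V).charpoly = A.charpoly := by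
  have hcomm : ∀ M : Matrix m m R[X], M * (Matrix.scalar m (X : R[X])) =
      (Matrix.scalar m (X : R[X])) * M := fun M =>
    (Matrix.scalar_commute (X : R[X]) (fun r' => Commute.all _ _) M).symm
  have key : charmatrix (U * A * V) = C.mapMatrix U * charmatrix A * C.mapMatrix V := by
    unfold charmatrix
    rw [Matrix.mul_sub, Matrix.sub_mul]
    congr 1
    · rw [hcomm (C.mapMatrix U), mul_assoc, ← map_mul C.mapMatrix, h1, _root_.map_one, mul_one]
    · rw [← map_mul C.mapMatrix, ← map_mul C.mapMatrix]
  have hdet1 : (C.mapMatrix U).det * (C.mapMatrix V).det = 1 := by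
    rw [← Matrix.det_mul, ← map_mul C.mapMatrix, h1, _root_.map_one, Matrix.det_one]
  unfold Matrix.charpoly
  rw [key, Matrix.det_mul, Matrix.det_mul]
  calc (C.mapMatrix U).det * (charmatrix A).det * (C.mapMatrix V).det
      = (charmatrix A).det * ((C.mapMatrix U).det * (C.mapMatrix V).det) := by ring
    _ = (charmatrix A).det := by rw [hdet1, mul_one]

lemma aux_charpoly_diagonal {m : Type*} [Fintype m] [DecidableEq m] {R : Type*} [CommRing R]
    (d : m → R) : (Matrix.diagonal d).charpoly = ∏ i, (X - C (d i)) := by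
  have h : charmatrix (Matrix.diagonal d) = Matrix.diagonal (fun i => (X : R[X]) - C (d i)) := by
    ext i j
    by_cases h : i = j
    · subst h; simp [charmatrix_apply_eq]
    · simp [charmatrix_apply_ne _ _ _ h, Matrix.diagonal_apply_ne _ h]
  unfold Matrix.charpoly
  rw [h, Matrix.det_diagonal]

lemma aux_charpoly_eq_prod_eigenvalues {n : ℕ} (A : Matrix (Fin n) (Fin n) ℝ)
    (hA : A.IsHermitian) : A.charpoly = ∏ i, (X - C (hA.eigenvalues i)) := by
  have hst := hA.spectral_theorem
  have h1 : (hA.eigenvectorUnitary : Matrix (Fin n) (Fin n) ℝ) *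
      (star (hA.eigenvectorUnitary : Matrix (Fin n) (Fin n) ℝ)) = 1 := by
    exact (Matrix.mem_unitaryGroup_iff).mp hA.eigenvectorUnitary.2
  have hdiag : Matrix.diagonal ((RCLike.ofReal : ℝ → ℝ) ∘ hA.eigenvalues) =
      Matrix.diagonal hA.eigenvalues := rfl
  calc A.charpoly
      = ((hA.eigenvectorUnitary : Matrix (Fin n) (Fin n) ℝ) *
          Matrix.diagonal ((RCLike.ofReal : ℝ → ℝ) ∘ hA.eigenvalues) *
          (star (hA.eigenvectorUnitary : Matrix (Fin n) (Fin n) ℝ))).charpoly := by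
          conv_lhs => rw [hst, Unitary.conjStarAlgAut_apply]
    _ = (Matrix.diagonal ((RCLike.ofReal : ℝ → ℝ) ∘ hA.eigenvalues)).charpoly :=
        aux_charpoly_conj _ _ _ h1
    _ = ∏ i, (X - C (hA.eigenvalues i)) := by rw [hdiag, aux_charpoly_diagonal]

lemma aux_count_transfer {n : ℕ} (μ ν : Fin n → ℝ)
    (h : (∏ i : Fin n, (X - C (μ i))) = ∏ i : Fin n, (X - C (ν i))) (c : ℝ) :
    (univ.filter fun i => μ i ≤ c).card = (univ.filter fun i => ν i ≤ c).card := by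
  have hmap : Multiset.map μ univ.val = Multiset.map ν univ.val := by
    have h1 : ∀ (f : Fin n → ℝ), (∏ i : Fin n, (X - C (f i))) =
        ((Multiset.map f univ.val).map fun a => X - C a).prod := by
      intro f
      rw [Multiset.map_map]
      rfl
    have := congrArg Polynomial.roots h
    rwa [h1 μ, h1 ν, Polynomial.roots_multiset_prod_X_sub_C,
      Polynomial.roots_multiset_prod_X_sub_C] at this
  classical
  have key : ∀ (f : Fin n → ℝ), (univ.filter fun i => f i ≤ c).card =
      Multiset.countP (fun x => x ≤ c) (Multiset.map f univ.val) := by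
    intro f
    rw [Multiset.countP_map]
    rw [← Finset.filter_val]
    rfl
  rw [key, key, hmap]

lemma aux_eigen_expansion {n : ℕ} (A : Matrix (Fin n) (Fin n) ℝ) (hA : A.IsHermitian) :
    ∃ r : (Fin n → ℝ) → Fin n → ℝ,
      (∀ (a b : ℝ) (x z : Fin n → ℝ), r (a • x + b • z) = a • r x + b • r z) ∧
      (∀ x z : Fin n → ℝ, x ⬝ᵥ z = ∑ i, r x i * r z i) ∧
      (∀ x i, r (A *ᵥ x) i = hA.eigenvalues i * r x i) := by
  classical
  set B := hA.eigenvectorBasis with hB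
  set e := WithLp.equiv 2 ((_ : Fin n) → ℝ) with he
  refine ⟨fun x i => e (B i) ⬝ᵥ x, ?_, ?_, ?_⟩
  · intro a b x z
    funext i
    simp [dotProduct_add, dotProduct_smul, smul_eq_mul]
  · intro x z
    have hinner : ∀ u w : EuclideanSpace ℝ (Fin n),
        (inner ℝ u w : ℝ) = e u ⬝ᵥ e w := by
      intro u w
      simp [PiLp.inner_apply, dotProduct, RCLike.inner_apply, he, mul_comm]
    have key := B.sum_inner_mul_inner (e.symm x) (e.symm z)
    simp only [hinner, Equiv.apply_symm_apply] at key
    rw [← key]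
    exact Finset.sum_congr rfl fun i _ => by
      rw [dotProduct_comm x (e (B i))]
  · intro x i
    have hsym : Aᵀ = A := by
      have := hA.eq
      rwa [Matrix.conjTranspose_eq_transpose_of_trivial] at this
    have hmv : A *ᵥ e (B i) = hA.eigenvalues i • e (B i) := hA.mulVec_eigenvectorBasis i
    show e (B i) ⬝ᵥ (A *ᵥ x) = hA.eigenvalues i * (e (B i) ⬝ᵥ x)
    rw [Matrix.dotProduct_mulVec, ← Matrix.mulVec_transpose, hsym, hmv,
      smul_dotProduct, smul_eq_mul]

lemma aux_two_small_eigs {n : ℕ} (A : Matrix (Fin n) (Fin n) ℝ) (hA : A.IsHermitian) (c : ℝ)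
    (hc : 0 ≤ c) (w₁ w₂ : Fin n → ℝ) (h1 : A *ᵥ w₁ = 0)
    (h2 : w₂ ⬝ᵥ (A *ᵥ w₂) ≤ c * (w₂ ⬝ᵥ w₂)) (h12 : w₁ ⬝ᵥ w₂ = 0)
    (hw1 : 0 < w₁ ⬝ᵥ w₁) (hw2 : 0 < w₂ ⬝ᵥ w₂) :
    2 ≤ ((univ : Finset (Fin n)).filter fun i => hA.eigenvalues i ≤ c).card := by
  classical
  by_contra hcard
  push_neg at hcard
  set S := (univ : Finset (Fin n)).filter (fun i => hA.eigenvalues i ≤ c) with hS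
  have hSle : S.card ≤ 1 := by omega
  obtain ⟨r, hlin, hpar, hev⟩ := aux_eigen_expansion A hA
  have hab : ∃ a b : ℝ, ¬(a = 0 ∧ b = 0) ∧ ∀ i ∈ S, a * r w₁ i + b * r w₂ i = 0 := by
    rcases S.eq_empty_or_nonempty with hSe | ⟨i₀, hi₀⟩
    · exact ⟨1, 0, by simp, by simp [hSe]⟩
    · have hSsing : S = {i₀} := by
        apply Finset.eq_singleton_iff_unique_mem.mpr
        exact ⟨hi₀, fun x hx => Finset.card_le_one.mp hSle x hx i₀ hi₀⟩
      by_cases h0 : r w₁ i₀ = 0 ∧ r w₂ i₀ = 0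
      · exact ⟨1, 0, by simp, by simp [hSsing, h0.1, h0.2]⟩
      · refine ⟨r w₂ i₀, -(r w₁ i₀), ?_, ?_⟩
        · rintro ⟨ha, hb⟩
          exact h0 ⟨by linarith [hb], ha⟩
        · intro i hi
          rw [hSsing, Finset.mem_singleton] at hi
          subst hi; ring
  obtain ⟨a, b, hab0, habS⟩ := hab
  set y : Fin n → ℝ := a • w₁ + b • w₂ with hy
  have hry : ∀ i, r y i = a * r w₁ i + b * r w₂ i := by
    intro i; rw [hy, hlin]; simp [smul_eq_mul]
  have hAy : A *ᵥ y = b • (A *ᵥ w₂) := by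
    rw [hy, Matrix.mulVec_add, Matrix.mulVec_smul, Matrix.mulVec_smul, h1, smul_zero, zero_add]
  have hq : y ⬝ᵥ (A *ᵥ y) = b^2 * (w₂ ⬝ᵥ (A *ᵥ w₂)) + a * b * (w₁ ⬝ᵥ (A *ᵥ w₂)) := by
    rw [hAy, hy]
    simp [add_dotProduct, smul_dotProduct, dotProduct_smul, smul_eq_mul]
    ring
  have hw1A : w₁ ⬝ᵥ (A *ᵥ w₂) = 0 := by
    have hsym : Aᵀ = A := by
      have := hA.eq
      rwa [Matrix.conjTranspose_eq_transpose_of_trivial] at this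
    rw [Matrix.dotProduct_mulVec, ← Matrix.mulVec_transpose, hsym, h1, zero_dotProduct]
  have hqle : y ⬝ᵥ (A *ᵥ y) ≤ c * (b^2 * (w₂ ⬝ᵥ w₂)) := by
    rw [hq, hw1A, mul_zero, add_zero]
    calc b^2 * (w₂ ⬝ᵥ (A *ᵥ w₂)) ≤ b^2 * (c * (w₂ ⬝ᵥ w₂)) := by
          apply mul_le_mul_of_nonneg_left h2 (sq_nonneg b)
      _ = c * (b^2 * (w₂ ⬝ᵥ w₂)) := by ring
  have hyy : y ⬝ᵥ y = a^2 * (w₁ ⬝ᵥ w₁) + b^2 * (w₂ ⬝ᵥ w₂) := by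
    rw [hy]
    simp [add_dotProduct, smul_dotProduct, dotProduct_smul, smul_eq_mul,
      dotProduct_comm w₂ w₁, h12]
    ring
  have hypos : 0 < y ⬝ᵥ y := by
    rw [hyy]
    rcases not_and_or.mp hab0 with ha | hb
    · have : 0 < a^2 := by positivity
      nlinarith
    · have : 0 < b^2 := by positivity
      nlinarith
  have hqley : y ⬝ᵥ (A *ᵥ y) ≤ c * (y ⬝ᵥ y) := by
    rw [hyy]
    calc y ⬝ᵥ (A *ᵥ y) ≤ c * (b^2 * (w₂ ⬝ᵥ w₂)) := hqle
      _ ≤ c * (a^2 * (w₁ ⬝ᵥ w₁) + b^2 * (w₂ ⬝ᵥ w₂)) := by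
          nlinarith [mul_nonneg hc (mul_nonneg (sq_nonneg a) hw1.le)]
  have hqeig : y ⬝ᵥ (A *ᵥ y) = ∑ i, hA.eigenvalues i * (r y i)^2 := by
    rw [dotProduct_comm, hpar (A *ᵥ y) y]
    exact Finset.sum_congr rfl fun i _ => by rw [hev]; ring
  have hyeig : y ⬝ᵥ y = ∑ i, (r y i)^2 := by
    rw [hpar y y]; exact Finset.sum_congr rfl fun i _ => (sq (r y i)).symm
  have hryS : ∀ i ∈ S, r y i = 0 := fun i hi => by rw [hry]; exact habS i hi
  have hex : ∃ i, i ∉ S ∧ r y i ≠ 0 := by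
    by_contra hno
    push_neg at hno
    have : ∀ i, r y i = 0 := by
      intro i
      by_cases hi : i ∈ S
      · exact hryS i hi
      · exact hno i hi
    rw [hyeig] at hypos
    simp [this] at hypos
  obtain ⟨j, hjS, hjne⟩ := hex
  have hjev : c < hA.eigenvalues j := by
    by_contra hle
    push_neg at hle
    exact hjS (Finset.mem_filter.mpr ⟨Finset.mem_univ j, hle⟩)
  have hpos : 0 < ∑ i, (hA.eigenvalues i - c) * (r y i)^2 := by
    apply Finset.sum_pos' ?_ ⟨j, Finset.mem_univ j, ?_⟩
    · intro i _
      by_cases hi : i ∈ S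
      · rw [hryS i hi]; simp
      · have : c < hA.eigenvalues i := by
          by_contra hle
          push_neg at hle
          exact hi (Finset.mem_filter.mpr ⟨Finset.mem_univ i, hle⟩)
        have := sq_nonneg (r y i)
        nlinarith
    · have h1 : 0 < (r y j)^2 := by positivity
      nlinarith
  have : ∑ i, (hA.eigenvalues i - c) * (r y i)^2 = y ⬝ᵥ (A *ᵥ y) - c * (y ⬝ᵥ y) := by
    rw [hqeig, hyeig, Finset.mul_sum, ← Finset.sum_sub_distrib]
    exact Finset.sum_congr rfl fun i _ => by ring
  rw [this] at hpos
  linarith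

lemma aux_distLap_isHermitian {n : ℕ} (G : SimpleGraph (Fin n)) : (distLap G).IsHermitian := by
  unfold distLap
  rw [Matrix.IsHermitian]
  ext u w
  by_cases h : u = w
  · subst h; simp [Matrix.conjTranspose_apply]
  · simp [Matrix.conjTranspose_apply, Matrix.diagonal_apply_ne _ (Ne.symm h),
      Matrix.diagonal_apply_ne _ h, Matrix.sub_apply, SimpleGraph.dist_comm]

lemma aux_distLap_mulVec_ones {n : ℕ} (G : SimpleGraph (Fin n)) :
    distLap G *ᵥ (fun _ => (1:ℝ)) = 0 := by
  funext u
  simp [distLap, Matrix.mulVec, dotProduct, Matrix.sub_apply, Matrix.diagonal_apply,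
    transm, Finset.sum_sub_distrib, Finset.sum_ite_eq]

lemma aux_dist_formula {n : ℕ} (G : SimpleGraph (Fin n)) [DecidableRel G.Adj]
    (hG : G.Connected) (hd : G.diam ≤ 2) (hn : 2 ≤ n) (u w : Fin n) :
    (G.dist u w : ℝ) = 2 - 2 * (if u = w then (1:ℝ) else 0) - (if G.Adj u w then (1:ℝ) else 0) := by
  haveI : Nonempty (Fin n) := ⟨⟨0, by omega⟩⟩
  have hnetop : G.ediam ≠ ⊤ := by
    obtain ⟨a, b, hab⟩ := SimpleGraph.exists_edist_eq_ediam_of_finite (α := Fin n) (G := G)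
    rw [← hab, SimpleGraph.edist_ne_top_iff_reachable]
    exact hG.preconnected a b
  by_cases he : u = w
  · subst he; simp
  · by_cases ha : G.Adj u w
    · rw [SimpleGraph.dist_eq_one_iff_adj.mpr ha]
      simp [he, ha]
      norm_num
    · have h2 : G.dist u w ≤ 2 := le_trans (SimpleGraph.dist_le_diam hnetop) hd
      have h1 : G.dist u w ≠ 1 := fun h => ha (SimpleGraph.dist_eq_one_iff_adj.mp h)
      have hpos : 0 < G.dist u w := hG.pos_dist_of_ne he
      have : G.dist u w = 2 := by omega
      rw [this]; simp [he, ha]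

theorem distLap_second_smallest_le (n : ℕ) (G : SimpleGraph (Fin n))
    [DecidableRel G.Adj] (hG : G.Connected) (hd : G.diam ≤ 2)
    (μ : Fin n → ℝ) (hμ : IsDLSpec G μ) (hmono : Antitone μ) :
    μ ⟨n - 2, by have h0 : 0 < n := Fin.pos_iff_nonempty.mpr hG.nonempty; omega⟩ ≤ 2 * (n : ℝ) - 1 - (G.maxDegree : ℝ) := by
  classical
  have h0 : 0 < n := Fin.pos_iff_nonempty.mpr hG.nonempty
  have hμ' : (distLap G).charpoly = ∏ i : Fin n, (X - C (μ i)) := hμ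
  -- the case n = 1
  by_cases hn1 : n = 1
  · subst hn1
    have hD : G.maxDegree = 0 := by
      have := SimpleGraph.maxDegree_lt_card_verts G
      simp only [Fintype.card_fin] at this
      omega
    have hcp : (distLap G).charpoly = X - C (μ 0) := by
      rw [hμ', Fin.prod_univ_one]
    have hzero : distLap G = Matrix.diagonal (fun _ : Fin 1 => (0:ℝ)) := by
      unfold distLap
      ext u w
      fin_cases u <;> fin_cases w
      simp [transm, Matrix.diagonal_apply, Matrix.sub_apply]
    have hcp2 : (distLap G).charpoly = X - C 0 := by
      rw [hzero, aux_charpoly_diagonal, Fin.prod_univ_one]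
    have hXC : X - C (μ 0) = X - C (0:ℝ) := by rw [← hcp, hcp2]
    have hμ0 : μ 0 = 0 := Polynomial.C_injective (sub_right_inj.mp hXC)
    have hidx : (⟨1 - 2, by omega⟩ : Fin 1) = 0 := by
      apply Fin.ext
      simp
    rw [hidx, hμ0, hD]
    norm_num
  -- now n ≥ 2
  have hn2 : 2 ≤ n := by omega
  haveI : Nonempty (Fin n) := ⟨⟨0, by omega⟩⟩
  obtain ⟨v, hv⟩ := G.exists_maximal_degree_vertex
  set dd : ℝ := (G.degree v : ℝ) with hdd
  -- adjacency indicator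
  set α : Fin n → Fin n → ℝ := fun u w => if G.Adj u w then (1:ℝ) else 0 with hα
  set δ : Fin n → ℝ := fun u => if u = v then (1:ℝ) else 0 with hδ
  have hα0 : ∀ u, α u u = 0 := fun u => by simp [hα]
  have hαs : ∀ u w, α u w = α w u := fun u w => by
    by_cases h : G.Adj u w
    · simp [hα, h, h.symm]
    · have h' : ¬ G.Adj w u := fun hh => h hh.symm
      simp [hα, h, h']
  have hαsq : ∀ u w, α u w * α u w = α u w := fun u w => by
    simp only [hα]; split <;> norm_num
  have hαnn : ∀ u w, 0 ≤ α u w := fun u w => by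
    simp only [hα]; split <;> norm_num
  have hαle1 : ∀ u w, α u w ≤ 1 := fun u w => by
    simp only [hα]; split <;> norm_num
  have hdeg : ∀ u, ∑ w, α u w = (G.degree u : ℝ) := by
    intro u
    simp only [hα]
    rw [Finset.sum_boole]
    congr 1
    simp [SimpleGraph.degree, SimpleGraph.neighborFinset_eq_filter]
  have hcol : ∀ f : Fin n → ℝ, ∑ u, δ u * f u = f v := by
    intro f
    simp only [hδ, ite_mul, one_mul, zero_mul]
    rw [Finset.sum_ite_eq' univ v f]
    simp
  -- the test vector
  set w₂ : Fin n → ℝ := fun u => dd * δ u - α v u with hw₂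
  have hw2sq : ∀ u, w₂ u * w₂ u = dd^2 * δ u + α v u := by
    intro u
    by_cases h : u = v
    · subst h
      simp only [hw₂, hδ, hα0, eq_self_iff_true, if_true]
      ring
    · simp only [hw₂, hδ, if_neg h]
      calc (dd * 0 - α v u) * (dd * 0 - α v u) = α v u * α v u := by ring
        _ = α v u := hαsq v u
        _ = dd^2 * 0 + α v u := by ring
  have hw2sum : ∑ u, w₂ u = 0 := by
    simp only [hw₂]
    rw [Finset.sum_sub_distrib]
    have h1 : ∑ u, dd * δ u = dd := by
      have h2 := hcol (fun _ => 1)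
      calc ∑ u, dd * δ u = dd * ∑ u, δ u * 1 := by
            rw [Finset.mul_sum]; exact Finset.sum_congr rfl fun u _ => by ring
        _ = dd := by rw [h2]; ring
    rw [h1, hdeg, ← hdd, sub_self]
  have hnorm : ∑ u, w₂ u * w₂ u = dd^2 + dd := by
    have key : ∑ u, (dd^2 * δ u + α v u) = dd^2 + dd := by
      rw [Finset.sum_add_distrib]
      have h1 : ∑ u, dd^2 * δ u = dd^2 := by
        have h2 := hcol (fun _ => 1)
        calc ∑ u, dd^2 * δ u = dd^2 * ∑ u, δ u * 1 := by
              rw [Finset.mul_sum]; exact Finset.sum_congr rfl fun u _ => by ring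
          _ = dd^2 := by rw [h2]; ring
      rw [h1, hdeg, ← hdd]
    rw [← key]
    exact Finset.sum_congr rfl fun u _ => hw2sq u
  -- transmission formula
  have htr : ∀ u, transm G u = 2 * n - 2 - (G.degree u : ℝ) := by
    intro u
    unfold transm
    have hpt : ∀ w, (G.dist u w : ℝ) = 2 - 2 * (if u = w then (1:ℝ) else 0) - α u w :=
      fun w => aux_dist_formula G hG hd hn2 u w
    rw [Finset.sum_congr rfl fun w _ => hpt w]
    rw [Finset.sum_sub_distrib, Finset.sum_sub_distrib, hdeg]
    have h1 : ∑ _w : Fin n, (2:ℝ) = 2 * n := by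
      rw [Finset.sum_const]
      simp [Finset.card_univ]
      ring
    have h2 : ∑ w : Fin n, 2 * (if u = w then (1:ℝ) else 0) = 2 := by
      rw [← Finset.mul_sum, Finset.sum_ite_eq univ u (fun _ => (1:ℝ))]
      simp
    rw [h1, h2]
  -- auxiliary sums
  set g : Fin n → ℝ := fun u => ∑ w, α u w * α v w with hg
  set E : ℝ := ∑ u, α v u * g u with hE
  set T : ℝ := ∑ u, α v u * (G.degree u : ℝ) with hT
  have hgv : g v = dd := by
    simp only [hg]
    rw [Finset.sum_congr rfl fun w _ => hαsq v w, hdeg, ← hdd]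
  -- inner sums against w₂
  have hαw : ∀ u, ∑ w, α u w * w₂ w = dd * α u v - g u := by
    intro u
    have hpt : ∀ w, α u w * w₂ w = dd * (δ w * α u w) - α u w * α v w := by
      intro w; simp only [hw₂]; ring
    rw [Finset.sum_congr rfl fun w _ => hpt w, Finset.sum_sub_distrib, ← Finset.mul_sum,
      hcol (fun w => α u w), hg]
  have hdw : ∀ u, ∑ w, (G.dist u w : ℝ) * w₂ w = -2 * w₂ u - dd * α u v + g u := by
    intro u
    have hpt : ∀ w, (G.dist u w : ℝ) * w₂ w =
        2 * w₂ w - 2 * ((if u = w then (1:ℝ) else 0) * w₂ w) - α u w * w₂ w := by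
      intro w
      rw [aux_dist_formula G hG hd hn2 u w]
      ring
    rw [Finset.sum_congr rfl fun w _ => hpt w, Finset.sum_sub_distrib, Finset.sum_sub_distrib,
      ← Finset.mul_sum, ← Finset.mul_sum, hw2sum, hαw u]
    have h2 : ∑ w, (if u = w then (1:ℝ) else 0) * w₂ w = w₂ u := by
      simp only [ite_mul, one_mul, zero_mul]
      rw [Finset.sum_ite_eq univ u w₂]
      simp
    rw [h2]
    ring
  -- the quadratic form value
  have hmul : ∀ u, (distLap G *ᵥ w₂) u =
      transm G u * w₂ u - (-2 * w₂ u - dd * α u v + g u) := by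
    intro u
    unfold distLap
    rw [Matrix.sub_mulVec]
    simp only [Pi.sub_apply, Matrix.mulVec_diagonal]
    congr 1
    show ∑ w, (Matrix.of fun a b : Fin n => (G.dist a b : ℝ)) u w * w₂ w = _
    simp only [Matrix.of_apply]
    exact hdw u
  have hA2 : ∑ u, (G.degree u : ℝ) * (dd^2 * δ u + α v u) = dd^3 + T := by
    have hpt : ∀ u, (G.degree u : ℝ) * (dd^2 * δ u + α v u) =
        dd^2 * (δ u * (G.degree u : ℝ)) + α v u * (G.degree u : ℝ) := fun u => by ring
    rw [Finset.sum_congr rfl fun u _ => hpt u, Finset.sum_add_distrib, ← Finset.mul_sum,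
      hcol (fun u => (G.degree u : ℝ)), ← hdd, ← hT]
    ring
  have hA4 : ∑ u, w₂ u * α u v = -dd := by
    have hpt : ∀ u, w₂ u * α u v = dd * (δ u * α u v) - α v u := by
      intro u
      have h1 : α v u * α u v = α v u := by rw [hαs u v]; exact hαsq v u
      simp only [hw₂]
      calc (dd * δ u - α v u) * α u v = dd * (δ u * α u v) - α v u * α u v := by ring
        _ = dd * (δ u * α u v) - α v u := by rw [h1]
    rw [Finset.sum_congr rfl fun u _ => hpt u, Finset.sum_sub_distrib, ← Finset.mul_sum,
      hcol (fun u => α u v), hα0, hdeg, ← hdd]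
    ring
  have hA5 : ∑ u, w₂ u * g u = dd^2 - E := by
    have hpt : ∀ u, w₂ u * g u = dd * (δ u * g u) - α v u * g u := by
      intro u; simp only [hw₂]; ring
    rw [Finset.sum_congr rfl fun u _ => hpt u, Finset.sum_sub_distrib, ← Finset.mul_sum,
      hcol g, hgv, ← hE]
    ring
  have hQ : w₂ ⬝ᵥ (distLap G *ᵥ w₂) =
      (2*(n:ℝ)-2)*(dd^2+dd) - (dd^3 + T) + 2*(dd^2+dd) + dd * (-dd) - (dd^2 - E) := by
    show ∑ u, w₂ u * (distLap G *ᵥ w₂) u = _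
    rw [Finset.sum_congr rfl fun u _ => by rw [hmul u]]
    have hpt : ∀ u, w₂ u * (transm G u * w₂ u - (-2 * w₂ u - dd * α u v + g u)) =
        (2*(n:ℝ)-2)*(w₂ u * w₂ u) - (G.degree u : ℝ)*(dd^2 * δ u + α v u)
          + 2*(w₂ u * w₂ u) + dd*(w₂ u * α u v) - w₂ u * g u := by
      intro u
      rw [htr u]
      rw [show (G.degree u : ℝ) * (dd^2 * δ u + α v u) = (G.degree u : ℝ) * (w₂ u * w₂ u) by
        rw [hw2sq u]]
      ring
    rw [Finset.sum_congr rfl fun u _ => hpt u]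
    rw [Finset.sum_sub_distrib, Finset.sum_add_distrib, Finset.sum_add_distrib,
      Finset.sum_sub_distrib, ← Finset.mul_sum, ← Finset.mul_sum, ← Finset.mul_sum,
      hnorm, hA2, hA4, hA5]
  -- the degree-sum bound
  have hTbound : dd + E ≤ T := by
    have hgle : ∀ u, α u v + g u ≤ ∑ w, α u w := by
      intro u
      have hterm : ∀ w, α u w * α v w + (if w = v then α u v else 0) ≤ α u w := by
        intro w
        by_cases h : w = v
        · subst h
          rw [hα0, if_pos rfl]
          simp
        · rw [if_neg h, add_zero]
          calc α u w * α v w ≤ α u w * 1 :=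
                mul_le_mul_of_nonneg_left (hαle1 v w) (hαnn u w)
            _ = α u w := mul_one _
      calc α u v + g u = ∑ w, (α u w * α v w + if w = v then α u v else 0) := by
            rw [Finset.sum_add_distrib]
            rw [Finset.sum_ite_eq' univ v (fun _ => α u v)]
            simp [hg, add_comm]
        _ ≤ ∑ w, α u w := Finset.sum_le_sum fun w _ => hterm w
    have hlow : ∑ u, α v u * (α u v + g u) = dd + E := by
      have hpt : ∀ u, α v u * (α u v + g u) = α v u + α v u * g u := by
        intro u
        have h1 : α v u * α u v = α v u := by rw [hαs u v]; exact hαsq v u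
        rw [mul_add, h1]
      rw [Finset.sum_congr rfl fun u _ => hpt u, Finset.sum_add_distrib, hdeg, ← hdd, ← hE]
    rw [← hlow, hT]
    apply Finset.sum_le_sum
    intro u _
    apply mul_le_mul_of_nonneg_left _ (hαnn v u)
    rw [← hdeg u]
    exact hgle u
  -- conclude the quadratic form bound
  set c : ℝ := 2*(n:ℝ) - 1 - dd with hc
  have hQle : w₂ ⬝ᵥ (distLap G *ᵥ w₂) ≤ c * (w₂ ⬝ᵥ w₂) := by
    have hwnorm : w₂ ⬝ᵥ w₂ = dd^2 + dd := hnorm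
    rw [hwnorm, hQ, hc]
    nlinarith [hTbound]
  -- positivity facts
  have hddpos : 1 ≤ dd := by
    have hadj : ∃ u, G.Adj v u := by
      haveI : Nontrivial (Fin n) := ⟨⟨⟨0, by omega⟩, ⟨1, by omega⟩, by simp [Fin.ext_iff]⟩⟩
      obtain ⟨u, hu⟩ := exists_ne v
      obtain ⟨p⟩ := hG.preconnected v u
      have hnn : ¬ p.Nil := SimpleGraph.Walk.not_nil_of_ne (Ne.symm hu)
      obtain ⟨x, hx, -, -⟩ := SimpleGraph.Walk.not_nil_iff.mp hnn
      exact ⟨x, hx⟩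
    have : 0 < G.degree v := (SimpleGraph.degree_pos_iff_exists_adj G v).mpr hadj
    rw [hdd]
    exact_mod_cast this
  have hw2pos : 0 < w₂ ⬝ᵥ w₂ := by
    have hwnorm : w₂ ⬝ᵥ w₂ = dd^2 + dd := hnorm
    rw [hwnorm]
    nlinarith
  have hcpos : 0 ≤ c := by
    have hlt : G.degree v < n := by
      have := G.degree_lt_card_verts v
      simpa [Fintype.card_fin] using this
    have : dd ≤ (n:ℝ) - 1 := by
      rw [hdd]
      have : (G.degree v : ℝ) + 1 ≤ (n:ℝ) := by exact_mod_cast hlt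
      linarith
    rw [hc]
    have hn2' : (2:ℝ) ≤ (n:ℝ) := by exact_mod_cast hn2
    linarith
  set w₁ : Fin n → ℝ := fun _ => 1 with hw₁
  have h1v : distLap G *ᵥ w₁ = 0 := aux_distLap_mulVec_ones G
  have h12 : w₁ ⬝ᵥ w₂ = 0 := by
    show ∑ u, w₁ u * w₂ u = 0
    rw [← hw2sum]
    exact Finset.sum_congr rfl fun u _ => by simp [hw₁]
  have hw1pos : 0 < w₁ ⬝ᵥ w₁ := by
    show 0 < ∑ _u : Fin n, (1:ℝ) * 1
    simp [Finset.card_univ]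
    omega
  -- apply the spectral lemma
  have hherm := aux_distLap_isHermitian G
  have hcnt2 : 2 ≤ ((univ : Finset (Fin n)).filter fun i => hherm.eigenvalues i ≤ c).card :=
    aux_two_small_eigs (distLap G) hherm c hcpos w₁ w₂ h1v hQle h12 hw1pos hw2pos
  have hcp : (∏ i : Fin n, (X - C (μ i))) = ∏ i : Fin n, (X - C (hherm.eigenvalues i)) :=
    hμ'.symm.trans (aux_charpoly_eq_prod_eigenvalues (distLap G) hherm)
  have hcntμ : 2 ≤ ((univ : Finset (Fin n)).filter fun i => μ i ≤ c).card := by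
    rw [aux_count_transfer μ hherm.eigenvalues hcp c]
    exact hcnt2
  -- extract two indices
  have hex : ∃ i ∈ (univ : Finset (Fin n)).filter (fun i => μ i ≤ c),
      ∃ j ∈ (univ : Finset (Fin n)).filter (fun i => μ i ≤ c), i ≠ j :=
    Finset.one_lt_card.mp (by omega)
  obtain ⟨i, hi, j, hj, hij⟩ := hex
  have hiμ : μ i ≤ c := (Finset.mem_filter.mp hi).2
  have hjμ : μ j ≤ c := (Finset.mem_filter.mp hj).2
  have hkey : ∀ a b : Fin n, a < b → μ a ≤ c →
      μ (⟨n - 2, by omega⟩ : Fin n) ≤ c := by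
    intro a b hab ha
    have hle : a ≤ (⟨n - 2, by omega⟩ : Fin n) := by
      have hb : b.val < n := b.isLt
      have : a.val < b.val := hab
      show a.val ≤ n - 2
      omega
    exact le_trans (hmono hle) ha
  have hfinal : μ (⟨n - 2, by omega⟩ : Fin n) ≤ c := by
    rcases lt_or_gt_of_ne hij with h | h
    · exact hkey i j h hiμ
    · exact hkey j i h hjμ
  have hmd : (G.maxDegree : ℝ) = dd := by rw [hv, hdd]
  rw [hmd]
  exact hfinal
end

section
/- Let G be a connected simple graph on n vertices. Then the second smallest distance Laplacian eigenvalue ∂_{n−1}^L(G) equals n if and only if the complement of G is disconnected; moreover, the multiplicity of n as a distance Laplacian eigenvalue of G is one less than the number of connected components of the complement of G. -/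
open Finset Matrix Polynomial

variable {n : ℕ}

/-- Quadratic form of a "weighted Laplacian". -/
lemma qform_aux (w : Fin n → Fin n → ℝ) (hsym : ∀ u v, w u v = w v u) (x : Fin n → ℝ) :
    x ⬝ᵥ ((Matrix.diagonal (fun v => ∑ u, w v u) - Matrix.of w) *ᵥ x)
      = (∑ u, ∑ v, w u v * (x u - x v) ^ 2) / 2 := by
  have lhs : x ⬝ᵥ ((Matrix.diagonal (fun v => ∑ u, w v u) - Matrix.of w) *ᵥ x)
      = ∑ v, ∑ u, (w v u * x v ^ 2 - w v u * x u * x v) := by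
    simp only [dotProduct, mulVec, Matrix.sub_apply, Matrix.diagonal_apply, Matrix.of_apply,
      sub_mul, ite_mul, zero_mul, Finset.sum_sub_distrib, Finset.sum_ite_eq, Finset.mem_univ,
      if_true]
    rw [← Finset.sum_sub_distrib]
    refine Finset.sum_congr rfl fun v _ => ?_
    rw [mul_sub, Finset.mul_sum, Finset.sum_mul, Finset.mul_sum]
    congr 1
    · exact Finset.sum_congr rfl fun u _ => by ring
    · exact Finset.sum_congr rfl fun u _ => by ring
  rw [lhs, eq_div_iff (by norm_num : (2:ℝ) ≠ 0)]
  set S := ∑ v, ∑ u, (w v u * x v ^ 2 - w v u * x u * x v) with hS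
  have key : ∀ u v : Fin n, w u v * (x u - x v) ^ 2
      = (w u v * x u ^ 2 - w u v * x u * x v) + (w u v * x v ^ 2 - w u v * x u * x v) := by
    intro u v; ring
  have e1 : ∑ u, ∑ v, (w u v * x u ^ 2 - w u v * x u * x v) = S := by
    refine Finset.sum_congr rfl fun v _ => Finset.sum_congr rfl fun u _ => by ring
  have e2 : ∑ u, ∑ v, (w u v * x v ^ 2 - w u v * x u * x v) = S := by
    rw [Finset.sum_comm]
    refine Finset.sum_congr rfl fun v _ => Finset.sum_congr rfl fun u _ => by rw [hsym]
  simp_rw [key]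
  simp_rw [Finset.sum_add_distrib]
  rw [e1, e2]
  ring

lemma charpoly_conj_units {N : Type*} [Fintype N] [DecidableEq N]
    (P A Q : Matrix N N ℝ) (hPQ : P * Q = 1) :
    (P * A * Q).charpoly = A.charpoly := by
  let F : Matrix N N ℝ →+* Matrix N N ℝ[X] := (C : ℝ →+* ℝ[X]).mapMatrix
  have hcm : charmatrix (P * A * Q) = F P * charmatrix A * F Q := by
    unfold Matrix.charmatrix
    rw [Matrix.mul_sub, Matrix.sub_mul]
    congr 1
    · have hc : F P * Matrix.scalar N (X : ℝ[X]) = Matrix.scalar N (X : ℝ[X]) * F P :=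
        (Matrix.scalar_commute (X : ℝ[X]) (fun r' => Commute.all _ _) (F P)).symm
      rw [hc, Matrix.mul_assoc, ← map_mul F, hPQ, _root_.map_one, mul_one]
    · rw [map_mul F, map_mul F]
  rw [Matrix.charpoly, Matrix.charpoly, hcm, Matrix.det_mul, Matrix.det_mul]
  have h1 : (F P).det * (F Q).det = 1 := by
    rw [← Matrix.det_mul, ← map_mul F, hPQ, _root_.map_one, Matrix.det_one]
  calc (F P).det * (charmatrix A).det * (F Q).det
      = (F P).det * (F Q).det * (charmatrix A).det := by ring
    _ = (charmatrix A).det := by rw [h1, one_mul]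

lemma charpoly_diagonal_real {N : Type*} [Fintype N] [DecidableEq N] (d : N → ℝ) :
    (Matrix.diagonal d).charpoly = ∏ i, (X - C (d i)) := by
  rw [Matrix.charpoly]
  have hcd : charmatrix (Matrix.diagonal d) = Matrix.diagonal (fun i => X - C (d i)) := by
    ext i j
    by_cases h : i = j
    · subst h; simp
    · rw [charmatrix_apply_ne _ _ _ h, Matrix.diagonal_apply_ne _ h,
        Matrix.diagonal_apply_ne _ h, map_zero, neg_zero]
  rw [hcd, Matrix.det_diagonal]

lemma hermitian_charpoly_prod {N : Type*} [Fintype N] [DecidableEq N] {A : Matrix N N ℝ}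
    (hA : A.IsHermitian) :
    A.charpoly = ∏ i, (X - C (hA.eigenvalues i)) := by
  have hU1 : (hA.eigenvectorUnitary : Matrix N N ℝ) * star (hA.eigenvectorUnitary : Matrix N N ℝ)
      = 1 := Matrix.mem_unitaryGroup_iff.mp hA.eigenvectorUnitary.2
  conv_lhs => rw [hA.spectral_theorem, Unitary.conjStarAlgAut_apply]
  rw [charpoly_conj_units _ _ _ hU1]
  simp only [RCLike.ofReal_real_eq_id, Function.id_comp]
  exact charpoly_diagonal_real _

lemma smul_one_diag {N : Type*} [Fintype N] [DecidableEq N] (t : ℝ) :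
    (t • (1 : Matrix N N ℝ)) = Matrix.diagonal (fun _ => t) := by
  ext i j
  by_cases h : i = j
  · subst h; simp
  · simp [Matrix.one_apply_ne h, Matrix.diagonal_apply_ne _ h]

lemma hermitian_finrank_ker_sub_smul {N : Type*} [Fintype N] [DecidableEq N] {A : Matrix N N ℝ}
    (hA : A.IsHermitian) (t : ℝ) :
    Module.finrank ℝ (LinearMap.ker (Matrix.toLin' (A - t • 1)))
      = Fintype.card {i // hA.eigenvalues i = t} := by
  set U := (hA.eigenvectorUnitary : Matrix N N ℝ) with hU
  have hU1 : U * star U = 1 := Matrix.mem_unitaryGroup_iff.mp hA.eigenvectorUnitary.2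
  have hU2 : star U * U = 1 := Matrix.mem_unitaryGroup_iff'.mp hA.eigenvectorUnitary.2
  have hdetU : IsUnit U.det := by
    apply Matrix.isUnit_det_of_right_inverse hU1
  have hdetsU : IsUnit (star U).det := by
    apply Matrix.isUnit_det_of_right_inverse hU2
  have key : A - t • 1 = U * Matrix.diagonal (fun i => hA.eigenvalues i - t) * star U := by
    have h1 : (t • 1 : Matrix N N ℝ) = U * (t • 1) * star U := by
      rw [Matrix.mul_smul, mul_one, Matrix.smul_mul, hU1]
    conv_lhs => rw [hA.spectral_theorem, Unitary.conjStarAlgAut_apply, h1]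
    rw [← Matrix.sub_mul, ← Matrix.mul_sub]
    congr 1
    congr 1
    simp only [RCLike.ofReal_real_eq_id, Function.id_comp]
    rw [smul_one_diag, Matrix.diagonal_sub]
  have hrank : (A - t • 1).rank = (Matrix.diagonal (fun i => hA.eigenvalues i - t)).rank := by
    rw [key, Matrix.rank_mul_eq_left_of_isUnit_det _ _ hdetsU,
      Matrix.rank_mul_eq_right_of_isUnit_det _ _ hdetU]
  have hrankd : (Matrix.diagonal (fun i => hA.eigenvalues i - t)).rank
      = Fintype.card {i // hA.eigenvalues i - t ≠ 0} := Matrix.rank_diagonal _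
  have hrn : (A - t • 1).rank + Module.finrank ℝ (LinearMap.ker (Matrix.toLin' (A - t • 1)))
      = Fintype.card N := by
    rw [Matrix.toLin'_apply']
    rw [Matrix.rank]
    rw [LinearMap.finrank_range_add_finrank_ker]
    simp [Module.finrank_pi]
  have hcompl : Fintype.card {i // hA.eigenvalues i - t ≠ 0}
      + Fintype.card {i // hA.eigenvalues i = t} = Fintype.card N := by
    have e : Fintype.card {i // hA.eigenvalues i - t ≠ 0}
        = Fintype.card {i // ¬ hA.eigenvalues i = t} := by
      apply Fintype.card_congr
      apply Equiv.subtypeEquivRight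
      intro i
      constructor
      · intro h hh; exact h (by rw [hh, sub_self])
      · intro h hh; exact h (by linarith [sub_eq_zero.mp hh])
    rw [e, Fintype.card_subtype_compl]
    have hle := Fintype.card_subtype_le (fun i => hA.eigenvalues i = t)
    omega
  omega


open Classical in
/-- excess weight -/
noncomputable def Wt {n : ℕ} (G : SimpleGraph (Fin n)) : Fin n → Fin n → ℝ :=
  fun u v => if u = v then 0 else (G.dist u v : ℝ) - 2 + (if G.Adj u v then 1 else 0)

noncomputable def Mw {n : ℕ} (G : SimpleGraph (Fin n)) : Matrix (Fin n) (Fin n) ℝ :=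
  Matrix.diagonal (fun v => ∑ u, Wt G v u) - Matrix.of (Wt G)

variable {G : SimpleGraph (Fin n)}

lemma Wt_symm (G : SimpleGraph (Fin n)) : ∀ u v, Wt G u v = Wt G v u := by
  intro u v
  unfold Wt
  by_cases h : u = v
  · subst h; simp
  · rw [if_neg h, if_neg (Ne.symm h), SimpleGraph.dist_comm]
    congr 2
    simp only [eq_iff_iff]
    exact ⟨fun ha => ha.symm, fun ha => ha.symm⟩

lemma Wt_nonneg (hG : G.Connected) (u v : Fin n) : 0 ≤ Wt G u v := by
  unfold Wt
  by_cases h : u = v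
  · simp [h]
  · rw [if_neg h]
    by_cases ha : G.Adj u v
    · rw [if_pos ha, (SimpleGraph.dist_eq_one_iff_adj).mpr ha]
      norm_num
    · rw [if_neg ha]
      have h1 : 0 < G.dist u v := hG.pos_dist_of_ne h
      have h2 : G.dist u v ≠ 1 := fun hd => ha (SimpleGraph.dist_eq_one_iff_adj.mp hd)
      have : 2 ≤ G.dist u v := by omega
      have : (2:ℝ) ≤ (G.dist u v : ℝ) := by exact_mod_cast this
      linarith

lemma Wt_compl (u v : Fin n) (h : Wt G u v ≠ 0) : Gᶜ.Adj u v := by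
  unfold Wt at h
  by_cases he : u = v
  · rw [if_pos he] at h; exact absurd rfl h
  · rw [if_neg he] at h
    by_cases ha : G.Adj u v
    · rw [if_pos ha, (SimpleGraph.dist_eq_one_iff_adj).mpr ha] at h
      norm_num at h
    · exact (SimpleGraph.compl_adj G u v).mpr ⟨he, ha⟩

lemma dist_pointwise [DecidableRel Gᶜ.Adj] (hG : G.Connected) (v u : Fin n) :
    (G.dist v u : ℝ) = (if v = u then 0 else 1) + (if Gᶜ.Adj v u then 1 else 0) + Wt G v u := by
  by_cases he : v = u
  · subst he
    simp [Wt, SimpleGraph.dist_self]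
  · rw [if_neg he]
    unfold Wt
    rw [if_neg he]
    by_cases ha : G.Adj v u
    · rw [(SimpleGraph.dist_eq_one_iff_adj).mpr ha, if_pos ha,
        if_neg (fun hc => ((SimpleGraph.compl_adj G v u).mp hc).2 ha)]
      norm_num
    · rw [if_neg ha, if_pos ((SimpleGraph.compl_adj G v u).mpr ⟨he, ha⟩)]
      ring

lemma sum_ite_self_zero_one (v : Fin n) :
    ∑ u : Fin n, (if v = u then (0:ℝ) else 1) = (n:ℝ) - 1 := by
  have h : ∀ u : Fin n, (if v = u then (0:ℝ) else 1) = 1 - (if v = u then 1 else 0) := by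
    intro u; by_cases h : v = u <;> simp [h]
  simp_rw [h]
  rw [Finset.sum_sub_distrib, Finset.sum_const, Finset.sum_ite_eq]
  simp

lemma distLap_decomp [inst : DecidableRel Gᶜ.Adj] (hG : G.Connected) :
    distLap G = (n:ℝ) • (1 : Matrix (Fin n) (Fin n) ℝ)
      - Matrix.of (fun _ _ : Fin n => (1:ℝ)) + Gᶜ.lapMatrix ℝ + Mw G := by
  ext v u
  by_cases he : v = u
  · subst he
    have hL : distLap G v v = transm G v := by
      simp [distLap, SimpleGraph.dist_self]
    have hR : ((n:ℝ) • (1 : Matrix (Fin n) (Fin n) ℝ)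
        - Matrix.of (fun _ _ : Fin n => (1:ℝ)) + Gᶜ.lapMatrix ℝ + Mw G) v v
        = (n:ℝ) - 1 + (∑ u, if Gᶜ.Adj v u then (1:ℝ) else 0) + ∑ u, Wt G v u := by
      simp only [Matrix.add_apply, Matrix.sub_apply, Matrix.smul_apply, Matrix.one_apply_eq,
        Matrix.of_apply, smul_eq_mul, mul_one, Mw, SimpleGraph.lapMatrix, SimpleGraph.degMatrix,
        SimpleGraph.adjMatrix]
      rw [Matrix.diagonal_apply_eq, Matrix.diagonal_apply_eq]
      rw [SimpleGraph.degree_eq_sum_if_adj Gᶜ v, if_neg (Gᶜ.irrefl)]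
      unfold Wt
      rw [if_pos rfl]
      ring
    rw [hL, hR]
    unfold transm
    simp_rw [dist_pointwise hG v]
    rw [Finset.sum_add_distrib, Finset.sum_add_distrib, sum_ite_self_zero_one]
  · have hL : distLap G v u = -(G.dist v u : ℝ) := by
      simp [distLap, Matrix.diagonal_apply_ne _ he]
    have hR : ((n:ℝ) • (1 : Matrix (Fin n) (Fin n) ℝ)
        - Matrix.of (fun _ _ : Fin n => (1:ℝ)) + Gᶜ.lapMatrix ℝ + Mw G) v u
        = -(1 + (if Gᶜ.Adj v u then (1:ℝ) else 0) + Wt G v u) := by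
      simp only [Matrix.add_apply, Matrix.sub_apply, Matrix.smul_apply,
        Matrix.one_apply_ne he, Matrix.of_apply, smul_eq_mul, mul_zero, Mw,
        SimpleGraph.lapMatrix, SimpleGraph.degMatrix, SimpleGraph.adjMatrix]
      rw [Matrix.diagonal_apply_ne _ he, Matrix.diagonal_apply_ne _ he]
      ring
    rw [hL, hR, dist_pointwise hG v u, if_neg he]

lemma distLap_eq_weight : distLap G
    = Matrix.diagonal (fun v => ∑ u, (G.dist v u : ℝ))
      - Matrix.of (fun u v : Fin n => (G.dist u v : ℝ)) := rfl

lemma dist_symm_real (G : SimpleGraph (Fin n)) :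
    ∀ u v : Fin n, (G.dist u v : ℝ) = (G.dist v u : ℝ) := by
  intro u v; rw [SimpleGraph.dist_comm]

lemma distLap_qform (x : Fin n → ℝ) :
    x ⬝ᵥ (distLap G *ᵥ x) = (∑ u, ∑ v, (G.dist u v : ℝ) * (x u - x v) ^ 2) / 2 := by
  rw [distLap_eq_weight]
  exact qform_aux _ (dist_symm_real G) x

lemma Mw_qform (x : Fin n → ℝ) :
    x ⬝ᵥ (Mw G *ᵥ x) = (∑ u, ∑ v, Wt G u v * (x u - x v) ^ 2) / 2 :=
  qform_aux _ (Wt_symm G) x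

lemma symm_hermitian {w : Fin n → Fin n → ℝ} (hsym : ∀ u v, w u v = w v u) :
    (Matrix.diagonal (fun v => ∑ u, w v u) - Matrix.of w).IsHermitian := by
  rw [Matrix.IsHermitian, Matrix.conjTranspose_eq_transpose_of_trivial]
  ext u v
  simp only [Matrix.transpose_apply, Matrix.sub_apply, Matrix.of_apply]
  rw [hsym u v]
  congr 1
  by_cases h : u = v
  · subst h; rfl
  · rw [Matrix.diagonal_apply_ne _ h, Matrix.diagonal_apply_ne _ (fun hh => h hh.symm)]

lemma distLap_hermitian (G : SimpleGraph (Fin n)) : (distLap G).IsHermitian := by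
  rw [distLap_eq_weight]; exact symm_hermitian (dist_symm_real G)

lemma Mw_hermitian (G : SimpleGraph (Fin n)) : (Mw G).IsHermitian :=
  symm_hermitian (Wt_symm G)

lemma Mw_posSemidef (hG : G.Connected) : (Mw G).PosSemidef := by
  refine Matrix.PosSemidef.of_dotProduct_mulVec_nonneg (Mw_hermitian G) fun x => ?_
  rw [star_trivial, Mw_qform]
  have : 0 ≤ ∑ u, ∑ v, Wt G u v * (x u - x v) ^ 2 := by
    apply Finset.sum_nonneg; intro u _
    apply Finset.sum_nonneg; intro v _
    exact mul_nonneg (Wt_nonneg hG u v) (sq_nonneg _)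
  linarith

lemma Mw_apply_eq_zero (hG : G.Connected) {x : Fin n → ℝ}
    (hx : ∀ u v, Gᶜ.Adj u v → x u = x v) : Mw G *ᵥ x = 0 := by
  rw [← (Mw_posSemidef hG).dotProduct_mulVec_zero_iff, star_trivial, Mw_qform]
  rw [_root_.div_eq_zero_iff]
  left
  apply Finset.sum_eq_zero; intro u _
  apply Finset.sum_eq_zero; intro v _
  by_cases h : Wt G u v = 0
  · rw [h, zero_mul]
  · rw [hx u v (Wt_compl u v h), sub_self]
    ring

lemma distLap_rowsum (G : SimpleGraph (Fin n)) (v : Fin n) :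
    ∑ u, distLap G v u = 0 := by
  simp only [distLap, Matrix.sub_apply, Matrix.of_apply, Finset.sum_sub_distrib,
    Matrix.diagonal_apply, Finset.sum_ite_eq, Finset.mem_univ, if_true]
  exact sub_eq_zero.mpr rfl

noncomputable def sumLin (n : ℕ) : (Fin n → ℝ) →ₗ[ℝ] ℝ := ∑ v, LinearMap.proj v

lemma sumLin_apply (x : Fin n → ℝ) : sumLin n x = ∑ v, x v := by
  simp [sumLin]

lemma sum_mulVec (B : Matrix (Fin n) (Fin n) ℝ) (x : Fin n → ℝ) :
    ∑ v, (B *ᵥ x) v = ∑ u, (∑ v, B v u) * x u := by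
  simp only [mulVec, dotProduct]
  rw [Finset.sum_comm]
  refine Finset.sum_congr rfl fun u _ => ?_
  rw [Finset.sum_mul]

lemma colsum_eq_zero_of_symm {B : Matrix (Fin n) (Fin n) ℝ} (hsym : B.IsHermitian)
    (hrow : ∀ v, ∑ u, B v u = 0) (u : Fin n) : ∑ v, B v u = 0 := by
  have h : ∀ v, B v u = B u v := fun v => by
    conv_lhs => rw [← hsym.eq]
    simp [Matrix.conjTranspose_apply]
  simp_rw [h]
  exact hrow u

lemma Mw_rowsum (G : SimpleGraph (Fin n)) (v : Fin n) : ∑ u, Mw G v u = 0 := by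
  simp only [Mw, Matrix.sub_apply, Matrix.of_apply, Finset.sum_sub_distrib,
    Matrix.diagonal_apply, Finset.sum_ite_eq, Finset.mem_univ, if_true]
  exact sub_eq_zero.mpr rfl

lemma lap_rowsum [DecidableRel Gᶜ.Adj] (v : Fin n) : ∑ u, Gᶜ.lapMatrix ℝ v u = 0 := by
  have h := congrFun (Gᶜ.lapMatrix_mulVec_const_eq_zero (R := ℝ)) v
  simpa [mulVec, dotProduct] using h

lemma lap_hermitian [DecidableRel Gᶜ.Adj] : (Gᶜ.lapMatrix ℝ).IsHermitian :=
  (SimpleGraph.posSemidef_lapMatrix ℝ Gᶜ).1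

lemma ones_mulVec (x : Fin n → ℝ) :
    (Matrix.of (fun _ _ : Fin n => (1:ℝ)) *ᵥ x) = fun _ => ∑ v, x v := by
  ext v; simp [mulVec, dotProduct]

lemma dot_ones_mulVec (x : Fin n → ℝ) :
    x ⬝ᵥ (Matrix.of (fun _ _ : Fin n => (1:ℝ)) *ᵥ x) = (∑ v, x v) * (∑ v, x v) := by
  rw [ones_mulVec]
  simp only [dotProduct]
  rw [← Finset.sum_mul]

lemma ker_distLap (hG : G.Connected) :
    LinearMap.ker (Matrix.toLin' (distLap G))
      = Submodule.span ℝ {fun _ : Fin n => (1:ℝ)} := by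
  have hn : 0 < n := by
    have := hG.nonempty
    rcases this with ⟨⟨i, hi⟩⟩
    omega
  apply le_antisymm
  · intro x hx
    have hx0 : distLap G *ᵥ x = 0 := by
      have := LinearMap.mem_ker.mp hx
      rwa [Matrix.toLin'_apply] at this
    have hq : (∑ u, ∑ v, (G.dist u v : ℝ) * (x u - x v) ^ 2) / 2 = 0 := by
      rw [← distLap_qform, hx0, dotProduct_zero]
    have hq0 : ∑ u, ∑ v, (G.dist u v : ℝ) * (x u - x v) ^ 2 = 0 := by
      rcases _root_.div_eq_zero_iff.mp hq with h | h
      · exact h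
      · norm_num at h
    have hterm : ∀ u ∈ Finset.univ, ∀ v ∈ Finset.univ,
        (G.dist u v : ℝ) * (x u - x v) ^ 2 = 0 := by
      have houter := (Finset.sum_eq_zero_iff_of_nonneg (fun u _ =>
        Finset.sum_nonneg (fun v _ => mul_nonneg (by positivity) (sq_nonneg _)))).mp hq0
      intro u hu v hv
      exact (Finset.sum_eq_zero_iff_of_nonneg (fun v _ =>
        mul_nonneg (by positivity) (sq_nonneg _))).mp (houter u hu) v hv
    have hconst : ∀ u v : Fin n, x u = x v := by
      intro u v
      by_cases h : u = v
      · rw [h]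
      · have hd : 0 < G.dist u v := hG.pos_dist_of_ne h
        have hdr : (0:ℝ) < (G.dist u v : ℝ) := by exact_mod_cast hd
        have ht := hterm u (Finset.mem_univ u) v (Finset.mem_univ v)
        rcases mul_eq_zero.mp ht with h1 | h2
        · exact absurd h1 (ne_of_gt hdr)
        · exact sub_eq_zero.mp (sq_eq_zero_iff.mp h2)
    refine Submodule.mem_span_singleton.mpr ⟨x ⟨0, hn⟩, ?_⟩
    funext u
    simp only [Pi.smul_apply, smul_eq_mul, mul_one]
    exact hconst ⟨0, hn⟩ u
  · rw [Submodule.span_le]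
    intro y hy
    rw [Set.mem_singleton_iff] at hy
    subst hy
    rw [SetLike.mem_coe, LinearMap.mem_ker, Matrix.toLin'_apply]
    funext v
    simp only [mulVec, dotProduct, mul_one, Pi.zero_apply]
    exact distLap_rowsum G v

lemma ker_sub_n [DecidableRel Gᶜ.Adj] (hG : G.Connected) :
    LinearMap.ker (Matrix.toLin' (distLap G - (n:ℝ) • 1))
      = LinearMap.ker (Matrix.toLin' (Gᶜ.lapMatrix ℝ)) ⊓ LinearMap.ker (sumLin n) := by
  have hn : 0 < n := by
    rcases hG.nonempty with ⟨⟨i, hi⟩⟩; omega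
  have hnR : ((n:ℝ)) ≠ 0 := by positivity
  have hsub : distLap G - (n:ℝ) • 1
      = Gᶜ.lapMatrix ℝ + Mw G - Matrix.of (fun _ _ : Fin n => (1:ℝ)) := by
    rw [distLap_decomp hG]; abel
  ext x
  simp only [LinearMap.mem_ker, Submodule.mem_inf, Matrix.toLin'_apply, sumLin_apply]
  constructor
  · intro hx
    rw [hsub, Matrix.sub_mulVec, Matrix.add_mulVec] at hx
    have hx' : Gᶜ.lapMatrix ℝ *ᵥ x + Mw G *ᵥ x
        - Matrix.of (fun _ _ : Fin n => (1:ℝ)) *ᵥ x = 0 := hx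
    have hsum0 : ∑ v, x v = 0 := by
      have h1 : ∑ v, (Gᶜ.lapMatrix ℝ *ᵥ x + Mw G *ᵥ x
          - Matrix.of (fun _ _ : Fin n => (1:ℝ)) *ᵥ x) v = 0 := by
        rw [hx']; simp
      have h2 : ∑ v, (Gᶜ.lapMatrix ℝ *ᵥ x) v = 0 := by
        rw [sum_mulVec]
        apply Finset.sum_eq_zero; intro u _
        rw [colsum_eq_zero_of_symm lap_hermitian lap_rowsum u, zero_mul]
      have h3 : ∑ v, (Mw G *ᵥ x) v = 0 := by
        rw [sum_mulVec]
        apply Finset.sum_eq_zero; intro u _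
        rw [colsum_eq_zero_of_symm (Mw_hermitian G) (Mw_rowsum G) u, zero_mul]
      have h4 : ∑ v, (Matrix.of (fun _ _ : Fin n => (1:ℝ)) *ᵥ x) v = (n:ℝ) * ∑ v, x v := by
        rw [ones_mulVec]
        rw [Finset.sum_const]
        simp [Finset.card_univ, nsmul_eq_mul]
      simp only [Pi.sub_apply, Pi.add_apply, Finset.sum_sub_distrib,
        Finset.sum_add_distrib] at h1
      rw [h2, h3, h4] at h1
      have : (n:ℝ) * ∑ v, x v = 0 := by linarith
      exact (mul_eq_zero.mp this).resolve_left hnR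
    have hJ0 : Matrix.of (fun _ _ : Fin n => (1:ℝ)) *ᵥ x = 0 := by
      rw [ones_mulVec, hsum0]; rfl
    have hLM : Gᶜ.lapMatrix ℝ *ᵥ x + Mw G *ᵥ x = 0 := by
      rw [hJ0, sub_zero] at hx'; exact hx'
    have hdot : x ⬝ᵥ (Gᶜ.lapMatrix ℝ *ᵥ x) + x ⬝ᵥ (Mw G *ᵥ x) = 0 := by
      rw [← dotProduct_add, hLM, dotProduct_zero]
    have e3 : 0 ≤ x ⬝ᵥ (Gᶜ.lapMatrix ℝ *ᵥ x) := by
      have := (SimpleGraph.posSemidef_lapMatrix ℝ Gᶜ).dotProduct_mulVec_nonneg x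
      rwa [star_trivial] at this
    have e4 : 0 ≤ x ⬝ᵥ (Mw G *ᵥ x) := by
      have := (Mw_posSemidef hG).dotProduct_mulVec_nonneg x
      rwa [star_trivial] at this
    have hLdot : x ⬝ᵥ (Gᶜ.lapMatrix ℝ *ᵥ x) = 0 := by linarith
    have hLx : Gᶜ.lapMatrix ℝ *ᵥ x = 0 := by
      have := ((SimpleGraph.posSemidef_lapMatrix ℝ Gᶜ).dotProduct_mulVec_zero_iff x).mp
      rw [star_trivial] at this
      exact this hLdot
    exact ⟨hLx, hsum0⟩
  · rintro ⟨hLx, hsum0⟩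
    have hadj : ∀ u v : Fin n, Gᶜ.Adj u v → x u = x v := by
      have : Matrix.toLin' (Gᶜ.lapMatrix ℝ) x = 0 → ∀ u v, Gᶜ.Adj u v → x u = x v :=
        fun h => Gᶜ.lapMatrix_mulVec_eq_zero_iff_forall_adj.mp h
      rw [Matrix.toLin'_apply] at this
      exact this hLx
    have hMx : Mw G *ᵥ x = 0 := Mw_apply_eq_zero hG hadj
    have hJ0 : Matrix.of (fun _ _ : Fin n => (1:ℝ)) *ᵥ x = 0 := by
      rw [ones_mulVec, hsum0]; rfl
    rw [hsub, Matrix.sub_mulVec, Matrix.add_mulVec, hLx, hMx, hJ0]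
    simp

lemma eigen_bound [DecidableRel Gᶜ.Adj] (hG : G.Connected) {x : Fin n → ℝ} {t : ℝ}
    (hx : x ≠ 0) (hxe : distLap G *ᵥ x = t • x) : t = 0 ∨ (n:ℝ) ≤ t := by
  by_cases ht : t = 0
  · exact Or.inl ht
  right
  have hsum : ∑ v, x v = 0 := by
    have h1 : ∑ v, (distLap G *ᵥ x) v = t * ∑ v, x v := by
      rw [hxe]; simp [Finset.mul_sum]
    have h2 : ∑ v, (distLap G *ᵥ x) v = 0 := by
      rw [sum_mulVec]
      apply Finset.sum_eq_zero; intro u _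
      rw [colsum_eq_zero_of_symm (distLap_hermitian G) (distLap_rowsum G) u, zero_mul]
    rw [h2] at h1
    exact (mul_eq_zero.mp h1.symm).resolve_left ht
  have hq : x ⬝ᵥ (distLap G *ᵥ x) = t * (x ⬝ᵥ x) := by
    rw [hxe, dotProduct_smul, smul_eq_mul]
  have e1 : x ⬝ᵥ (((n:ℝ) • (1 : Matrix (Fin n) (Fin n) ℝ)) *ᵥ x) = (n:ℝ) * (x ⬝ᵥ x) := by
    rw [Matrix.smul_mulVec, Matrix.one_mulVec, dotProduct_smul, smul_eq_mul]
  have e2 : x ⬝ᵥ (Matrix.of (fun _ _ : Fin n => (1:ℝ)) *ᵥ x) = 0 := by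
    rw [dot_ones_mulVec, hsum, mul_zero]
  have e3 : 0 ≤ x ⬝ᵥ (Gᶜ.lapMatrix ℝ *ᵥ x) := by
    have := (SimpleGraph.posSemidef_lapMatrix ℝ Gᶜ).dotProduct_mulVec_nonneg x
    rwa [star_trivial] at this
  have e4 : 0 ≤ x ⬝ᵥ (Mw G *ᵥ x) := by
    have := (Mw_posSemidef hG).dotProduct_mulVec_nonneg x
    rwa [star_trivial] at this
  have hq2 : (n:ℝ) * (x ⬝ᵥ x) ≤ x ⬝ᵥ (distLap G *ᵥ x) := by
    rw [distLap_decomp hG, Matrix.add_mulVec, Matrix.add_mulVec, Matrix.sub_mulVec,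
      dotProduct_add, dotProduct_add, dotProduct_sub]
    linarith
  have hxx : 0 < x ⬝ᵥ x := by
    have hne : x ⬝ᵥ x ≠ 0 := fun h => hx (dotProduct_self_eq_zero.mp h)
    have hge : 0 ≤ x ⬝ᵥ x := Finset.sum_nonneg fun v _ => mul_self_nonneg (x v)
    exact lt_of_le_of_ne hge (Ne.symm hne)
  nlinarith [hq, hq2, hxx]

lemma ones_ne_zero (hn : 0 < n) : (fun _ : Fin n => (1:ℝ)) ≠ 0 := by
  intro h
  have := congrFun h ⟨0, hn⟩
  norm_num at this

lemma finrank_ker_distLap (hG : G.Connected) :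
    Module.finrank ℝ (LinearMap.ker (Matrix.toLin' (distLap G))) = 1 := by
  have hn : 0 < n := by rcases hG.nonempty with ⟨⟨i, hi⟩⟩; omega
  rw [ker_distLap hG]
  exact finrank_span_singleton (ones_ne_zero hn)

lemma finrank_inf_eq (hn : 0 < n) [DecidableRel Gᶜ.Adj] [DecidableEq Gᶜ.ConnectedComponent] :
    Module.finrank ℝ
      ((LinearMap.ker (Matrix.toLin' (Gᶜ.lapMatrix ℝ)) ⊓ LinearMap.ker (sumLin n) :
        Submodule ℝ (Fin n → ℝ)))
      = Fintype.card Gᶜ.ConnectedComponent - 1 := by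
  set K := LinearMap.ker (Matrix.toLin' (Gᶜ.lapMatrix ℝ)) with hK
  set V := LinearMap.ker (sumLin n) with hV
  have hKc : Module.finrank ℝ K = Fintype.card Gᶜ.ConnectedComponent :=
    (Gᶜ.card_connectedComponent_eq_finrank_ker_toLin'_lapMatrix).symm
  have hones_K : (fun _ : Fin n => (1:ℝ)) ∈ K := by
    rw [hK, LinearMap.mem_ker, Matrix.toLin'_apply]
    exact Gᶜ.lapMatrix_mulVec_const_eq_zero
  have hones_V : (fun _ : Fin n => (1:ℝ)) ∉ V := by
    rw [hV, LinearMap.mem_ker, sumLin_apply]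
    simp only [Finset.sum_const, Finset.card_univ, Fintype.card_fin, nsmul_eq_mul, mul_one]
    positivity
  have hsurj : Function.Surjective (sumLin n) := by
    intro r
    refine ⟨fun _ => r / n, ?_⟩
    rw [sumLin_apply]
    rw [Finset.sum_const]
    simp only [Finset.card_univ, Fintype.card_fin, nsmul_eq_mul]
    field_simp
  have hVrank : Module.finrank ℝ V + 1 = n := by
    have := LinearMap.finrank_range_add_finrank_ker (sumLin n)
    rw [LinearMap.range_eq_top.mpr hsurj] at this
    rw [finrank_top] at this
    rw [Module.finrank_self, Module.finrank_fintype_fun_eq_card, Fintype.card_fin] at this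
    rw [← hV] at this
    omega
  have hfintotal : Module.finrank ℝ (Fin n → ℝ) = n := by
    rw [Module.finrank_fintype_fun_eq_card, Fintype.card_fin]
  have hVlt : V < K ⊔ V := by
    refine lt_of_le_of_ne le_sup_right ?_
    intro hEq
    exact hones_V (hEq ▸ Submodule.mem_sup_left hones_K)
  have hsup : Module.finrank ℝ (K ⊔ V : Submodule ℝ (Fin n → ℝ)) = n := by
    have h1 : Module.finrank ℝ V < Module.finrank ℝ (K ⊔ V : Submodule ℝ (Fin n → ℝ)) :=
      Submodule.finrank_lt_finrank_of_lt hVlt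
    have h2 := Submodule.finrank_le (K ⊔ V : Submodule ℝ (Fin n → ℝ))
    omega
  have hform := Submodule.finrank_sup_add_finrank_inf_eq K V
  rw [hsup, hKc] at hform
  omega

theorem distLap_second_smallest_eq_n_iff (n : ℕ) (G : SimpleGraph (Fin n))
    (hG : G.Connected) (μ : Fin n → ℝ) (hμ : IsDLSpec G μ) (hmono : Antitone μ) :
    (μ ⟨n - 2, by have h0 : 0 < n := Fin.pos_iff_nonempty.mpr hG.nonempty; omega⟩ = (n : ℝ) ↔ ¬ Gᶜ.Connected) ∧
    Set.ncard {i : Fin n | μ i = (n : ℝ)} = Nat.card Gᶜ.ConnectedComponent - 1 := by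
  classical
  have hn : 0 < n := Fin.pos_iff_nonempty.mpr hG.nonempty
  have hA : (distLap G).IsHermitian := distLap_hermitian G
  set lam := hA.eigenvalues with hlam
  have hms : Finset.univ.val.map μ = Finset.univ.val.map lam := by
    have h1 : ∏ i : Fin n, (X - C (μ i)) = ∏ i : Fin n, (X - C (lam i)) := by
      rw [← hμ]
      exact hermitian_charpoly_prod hA
    have h2 : ((Finset.univ.val.map μ).map (fun r : ℝ => X - C r)).prod
        = ((Finset.univ.val.map lam).map (fun r : ℝ => X - C r)).prod := by
      rw [Multiset.map_map, Multiset.map_map,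
        ← Finset.prod_eq_multiset_prod, ← Finset.prod_eq_multiset_prod]
      exact h1
    have h3 := congrArg Polynomial.roots h2
    rwa [Polynomial.roots_multiset_prod_X_sub_C, Polynomial.roots_multiset_prod_X_sub_C] at h3
  have hcount : ∀ t : ℝ, (Finset.univ.filter (fun i => μ i = t)).card
      = (Finset.univ.filter (fun i => lam i = t)).card := by
    intro t
    have h := congrArg (Multiset.countP (fun r : ℝ => r = t)) hms
    rw [Multiset.countP_map, Multiset.countP_map] at h
    exact h
  have hkercount : ∀ t : ℝ, (Finset.univ.filter (fun i => lam i = t)).card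
      = Module.finrank ℝ (LinearMap.ker (Matrix.toLin' (distLap G - t • 1))) := by
    intro t
    rw [hermitian_finrank_ker_sub_smul hA t, Fintype.card_subtype]
  have hcount0 : (Finset.univ.filter (fun i => μ i = (0:ℝ))).card = 1 := by
    rw [hcount 0, hkercount 0]
    have h0 : distLap G - (0:ℝ) • 1 = distLap G := by simp
    rw [h0]
    exact finrank_ker_distLap hG
  have hcountn : (Finset.univ.filter (fun i => μ i = (n:ℝ))).card
      = Fintype.card Gᶜ.ConnectedComponent - 1 := by
    rw [hcount, hkercount, ker_sub_n hG, finrank_inf_eq hn]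
  have hbound : ∀ j, lam j = 0 ∨ (n:ℝ) ≤ lam j := by
    intro j
    have hne : (⇑(hA.eigenvectorBasis j) : Fin n → ℝ) ≠ 0 := by
      intro h
      apply hA.eigenvectorBasis.orthonormal.ne_zero j
      ext i
      exact congrFun h i
    exact eigen_bound hG hne (hA.mulVec_eigenvectorBasis j)
  have hμval : ∀ i, μ i = 0 ∨ (n:ℝ) ≤ μ i := by
    intro i
    have hmem : μ i ∈ Finset.univ.val.map lam := by
      rw [← hms]
      exact Multiset.mem_map_of_mem μ (Finset.mem_univ_val i)
    rcases Multiset.mem_map.mp hmem with ⟨j, _, hj⟩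
    exact hj ▸ hbound j
  have hiLlt : n - 1 < n := by omega
  have hi2lt : n - 2 < n := by omega
  have hμL : μ ⟨n - 1, hiLlt⟩ = 0 := by
    have hpos : 0 < (Finset.univ.filter (fun i => μ i = (0:ℝ))).card := by
      rw [hcount0]; norm_num
    rcases Finset.card_pos.mp hpos with ⟨j, hj⟩
    have hj0 : μ j = 0 := (Finset.mem_filter.mp hj).2
    have hle : μ ⟨n - 1, hiLlt⟩ ≤ μ j := by
      apply hmono
      rw [Fin.le_def]
      show (j : ℕ) ≤ n - 1
      have := j.isLt
      omega
    have hge : 0 ≤ μ ⟨n - 1, hiLlt⟩ := by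
      rcases hμval ⟨n - 1, hiLlt⟩ with h | h
      · exact h.ge
      · have : (0:ℝ) ≤ n := by positivity
        linarith
    linarith [hj0 ▸ hle]
  have hmain : (μ ⟨n - 2, hi2lt⟩ = (n : ℝ) ↔ ¬ Gᶜ.Connected) := by
    constructor
    · intro h hconn
      have h1 : 0 < (Finset.univ.filter (fun i => μ i = (n:ℝ))).card :=
        Finset.card_pos.mpr ⟨⟨n - 2, hi2lt⟩, Finset.mem_filter.mpr ⟨Finset.mem_univ _, h⟩⟩
      rw [hcountn] at h1
      have hle1 : Fintype.card Gᶜ.ConnectedComponent ≤ 1 := by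
        refine Fintype.card_le_one_iff.mpr fun a b => ?_
        rcases Quot.exists_rep a with ⟨u, rfl⟩
        rcases Quot.exists_rep b with ⟨v, rfl⟩
        exact SimpleGraph.ConnectedComponent.eq.mpr (hconn.preconnected u v)
      omega
    · intro hncon
      have hcge2 : 2 ≤ Fintype.card Gᶜ.ConnectedComponent := by
        by_contra hc
        push_neg at hc
        apply hncon
        haveI : Nonempty (Fin n) := ⟨⟨0, hn⟩⟩
        refine ⟨fun u v => ?_⟩
        have hle1 : Fintype.card Gᶜ.ConnectedComponent ≤ 1 := by omega
        have := Fintype.card_le_one_iff.mp hle1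
          (Gᶜ.connectedComponentMk u) (Gᶜ.connectedComponentMk v)
        exact SimpleGraph.ConnectedComponent.eq.mp this
      have hn2 : 2 ≤ n := by
        by_contra hlt
        push_neg at hlt
        have hn1 : n = 1 := by omega
        apply hncon
        haveI : Nonempty (Fin n) := ⟨⟨0, hn⟩⟩
        refine ⟨fun u v => ?_⟩
        have : u = v := by
          apply Fin.ext
          omega
        rw [this]
      have hpos : 0 < (Finset.univ.filter (fun i => μ i = (n:ℝ))).card := by
        rw [hcountn]; omega
      rcases Finset.card_pos.mp hpos with ⟨j, hj⟩
      have hjn : μ j = n := (Finset.mem_filter.mp hj).2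
      have hjne : (j : ℕ) ≠ n - 1 := by
        intro hjv
        have : j = ⟨n - 1, hiLlt⟩ := Fin.ext hjv
        rw [this, hμL] at hjn
        have : (0:ℝ) < n := by positivity
        linarith
      have hle : μ ⟨n - 2, hi2lt⟩ ≤ μ j := by
        apply hmono
        rw [Fin.le_def]
        show (j : ℕ) ≤ n - 2
        have := j.isLt
        omega
      have hne0 : μ ⟨n - 2, hi2lt⟩ ≠ 0 := by
        intro h0
        have h2le : 2 ≤ (Finset.univ.filter (fun i => μ i = (0:ℝ))).card := by
          apply Finset.one_lt_card.mpr
          refine ⟨⟨n - 2, hi2lt⟩, Finset.mem_filter.mpr ⟨Finset.mem_univ _, h0⟩,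
            ⟨n - 1, hiLlt⟩, Finset.mem_filter.mpr ⟨Finset.mem_univ _, hμL⟩, ?_⟩
          intro hEq
          have := congrArg Fin.val hEq
          simp at this
          omega
        rw [hcount0] at h2le
        omega
      rcases hμval ⟨n - 2, hi2lt⟩ with h | h
      · exact absurd h hne0
      · exact le_antisymm (hjn ▸ hle) h
  refine ⟨hmain, ?_⟩
  have hset : {i : Fin n | μ i = (n:ℝ)}
      = ↑(Finset.univ.filter (fun i => μ i = (n:ℝ))) := by
    ext i; simp
  rw [hset, Set.ncard_coe_finset, hcountn, Nat.card_eq_fintype_card]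
end
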